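/- arXiv:1604.05084 — 8 statements merged into one kernel-verified Lean document; each statement's English description precedes it below -/
import Mathlib

section
/- Let 1 ≤ m ≤ n and 1 ≤ k ≤ C(n,m), and let I be the initial segment of length k in the colex order on m-element subsets of [n]. Then the boundary of I in the Johnson graph J(n,m) has cardinality |∂I| = f(k,n,m). -/
open Finset

/-- The set of vertices of the Johnson graph `J(n,m)`: the `m`-element subsets of
`[n] = {0, …, n-1}`. -/
def johnsonVerts (n m : ℕ) : Finset (Finset ℕ) :=
  (Finset.range n).powersetCard m

/-- The (vertex) boundary of a set `S` of vertices in the Johnson graph `J(n,m)`: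
the vertices outside `S` whose symmetric difference with some member of `S` has
cardinality `2`. -/
def boundary (n m : ℕ) (S : Finset (Finset ℕ)) : Finset (Finset ℕ) :=
  (johnsonVerts n m).filter fun y => y ∉ S ∧ ∃ x ∈ S, (symmDiff x y).card = 2

/-- The ball of a set `S` of vertices in the Johnson graph `J(n,m)`. -/
def ball (n m : ℕ) (S : Finset (Finset ℕ)) : Finset (Finset ℕ) :=
  S ∪ boundary n m S

/-- The initial segment of length `k` in the colex order on `m`-element subsets of
`[n]`: the `m`-subsets `s` such that fewer than `k` of the `m`-subsets are
colex-smaller than `s`. -/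
def colexInitSeg (n m k : ℕ) : Finset (Finset ℕ) :=
  (johnsonVerts n m).filter fun s =>
    ((johnsonVerts n m).filter fun t =>
      toColex t < toColex s).card < k

/-- The isoperimetric function `μ_{n,m}(k)` of the Johnson graph `J(n,m)`:
the smallest boundary cardinality among sets of `k` vertices. -/
noncomputable def mu (n m k : ℕ) : ℕ :=
  sInf {b | ∃ S : Finset (Finset ℕ),
    S ⊆ johnsonVerts n m ∧ S.card = k ∧ (boundary n m S).card = b}

/-- The lower shadow of a family `S` of `m`-element subsets of `[n]`:
the `(m-1)`-subsets contained in some member of `S`. -/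
def lowShadow (n m : ℕ) (S : Finset (Finset ℕ)) : Finset (Finset ℕ) :=
  ((Finset.range n).powersetCard (m - 1)).filter fun t => ∃ s ∈ S, t ⊆ s

/-- The upper shadow of a family `S` of `c`-element subsets of `[n]`:
the `(c+1)`-subsets of `[n]` containing some member of `S`. -/
def upShadow' (n c : ℕ) (S : Finset (Finset ℕ)) : Finset (Finset ℕ) :=
  ((Finset.range n).powersetCard (c + 1)).filter fun t => ∃ s ∈ S, s ⊆ t

/-- The shift `T_{ij}` applied to a single set `x` of the family `S`. -/
def shiftFun (i j : ℕ) (S : Finset (Finset ℕ)) (x : Finset ℕ) : Finset ℕ :=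
  if i ∈ x ∧ j ∉ x ∧ insert j (x.erase i) ∉ S then insert j (x.erase i) else x

/-- The shift `T_{ij}(S)` of a family `S`. -/
def shift (i j : ℕ) (S : Finset (Finset ℕ)) : Finset (Finset ℕ) :=
  S.image (shiftFun i j S)

/-- `ks 0 > ks 1 > ⋯ > ks r ≥ m - r > 0` and `k = ∑_{i=0}^{r} C(ks i, m - i)`:
the `m`-binomial representation of `k`. -/
def IsMBinomialRep (m k r : ℕ) (ks : ℕ → ℕ) : Prop :=
  (∀ i < r, ks (i + 1) < ks i) ∧ m - r ≤ ks r ∧ r < m ∧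
    k = ∑ i ∈ Finset.range (r + 1), (ks i).choose (m - i)

/-- The function `f(k,n,m)` computed from the `m`-binomial representation
`k = ∑_{i=0}^{r} C(ks i, m - i)`:
`f = C(ks 0, m-1)·(n - ks 0) + ∑_{i=1}^{r} (C(ks i, m-i-1)·(n - ks 0 - 1) - C(ks i, m-i))`. -/
def fVal (n m r : ℕ) (ks : ℕ → ℕ) : ℤ :=
  ((ks 0).choose (m - 1) : ℤ) * ((n : ℤ) - ks 0) +
    ∑ i ∈ Finset.Icc 1 r,
      (((ks i).choose (m - i - 1) : ℤ) * ((n : ℤ) - ks 0 - 1) - ((ks i).choose (m - i) : ℤ))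

/-- The generalized binomial coefficient `C(x, j) = x(x-1)⋯(x-j+1)/j!` for an
integer `x` (the division is exact). -/
def genChoose (x : ℤ) (j : ℕ) : ℤ :=
  (∏ i ∈ Finset.range j, (x - i)) / (j.factorial : ℤ)

namespace CBAux

variable {n m k r : ℕ} {ks : ℕ → ℕ}

lemma ks_lt (h : ∀ i < r, ks (i + 1) < ks i) :
    ∀ {j i}, i < j → j ≤ r → ks j < ks i := by
  intro j
  induction j with
  | zero => intro i hij _; omega
  | succ p ih =>
    intro i hij hjr
    rcases eq_or_lt_of_le (Nat.lt_succ_iff.mp hij) with h' | h'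
    · subst h'; exact h i (by omega)
    · exact lt_trans (h p (by omega)) (ih h' (by omega))

lemma ks_le (h : ∀ i < r, ks (i + 1) < ks i) :
    ∀ {i j}, i ≤ j → j ≤ r → ks j ≤ ks i := by
  intro i j hij hjr
  rcases eq_or_lt_of_le hij with rfl | h'
  · exact le_refl _
  · exact (ks_lt h h' hjr).le

lemma ks_add (h : ∀ i < r, ks (i + 1) < ks i) :
    ∀ {j i}, i ≤ j → j ≤ r → ks j + j ≤ ks i + i := by
  intro j
  induction j with
  | zero => intro i hij _; have : i = 0 := by omega
            subst this; omega
  | succ p ih =>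
    intro i hij hjr
    rcases eq_or_lt_of_le hij with rfl | h'
    · omega
    · have h1 := h p (by omega)
      have h2 := ih (Nat.lt_succ_iff.mp h') (by omega)
      omega

lemma ks_ge (h : ∀ i < r, ks (i + 1) < ks i) (h2 : m - r ≤ ks r) :
    ∀ {i}, i ≤ r → m - i ≤ ks i := by
  intro i hi
  have := ks_add h hi le_rfl
  omega




/-- `B ks i = {ks 0, …, ks (i-1)}`. -/
def B (ks : ℕ → ℕ) (i : ℕ) : Finset ℕ := (Finset.range i).image ks

lemma mem_B {i a : ℕ} : a ∈ B ks i ↔ ∃ l < i, ks l = a := by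
  simp [B]

lemma card_B (h : ∀ i < r, ks (i + 1) < ks i) {i : ℕ} (hi : i ≤ r) : (B ks i).card = i := by
  rw [B, card_image_of_injOn, card_range]
  intro a ha b hb hab
  simp only [coe_range, Set.mem_Iio] at ha hb
  by_contra hne
  rcases Nat.lt_or_ge a b with h' | h'
  · exact absurd hab (ne_of_gt (ks_lt h h' (by omega)))
  · exact absurd hab (ne_of_lt (ks_lt h (by omega) (by omega)))

lemma not_mem_B_self (h : ∀ i < r, ks (i + 1) < ks i) {i : ℕ} (hi : i ≤ r) :
    ks i ∉ B ks i := by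
  rw [mem_B]
  rintro ⟨l, hl, hla⟩
  exact absurd hla (ne_of_gt (ks_lt h hl hi))

lemma B_lt_of_mem (h : ∀ i < r, ks (i + 1) < ks i) {i a : ℕ} (hi : i ≤ r)
    (ha : a ∈ B ks i) : ks i ≤ a ∧ a ≤ ks 0 := by
  rw [mem_B] at ha
  obtain ⟨l, hl, rfl⟩ := ha
  exact ⟨(ks_lt h hl hi).le, ks_le h (Nat.zero_le l) (by omega)⟩

lemma B_subset_B {i j : ℕ} (hij : i ≤ j) : B ks i ⊆ B ks j := by
  intro a ha; rw [mem_B] at ha ⊢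
  obtain ⟨l, hl, rfl⟩ := ha
  exact ⟨l, by omega, rfl⟩

/-- the `i`-th block of the initial segment. -/
def term (m : ℕ) (ks : ℕ → ℕ) (i : ℕ) : Finset (Finset ℕ) :=
  ((Finset.range (ks i)).powersetCard (m - i)).image fun A => B ks i ∪ A

/-- the explicit description of the initial segment. -/
def Iexp (m r : ℕ) (ks : ℕ → ℕ) : Finset (Finset ℕ) :=
  (Finset.range (r + 1)).biUnion (term m ks)

lemma mem_term_iff (h : ∀ i < r, ks (i + 1) < ks i) (hrm : r < m) {i : ℕ} (hi : i ≤ r)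
    {y : Finset ℕ} :
    y ∈ term m ks i ↔ B ks i ⊆ y ∧ (∀ b ∈ y, b ∉ B ks i → b < ks i) ∧ y.card = m := by
  constructor
  · rintro hy
    simp only [term, mem_image, mem_powersetCard, mem_range] at hy
    obtain ⟨A, ⟨hAsub, hAcard⟩, rfl⟩ := hy
    have hdisj : Disjoint (B ks i) A := by
      rw [disjoint_left]
      intro a ha hA
      have h1 := (B_lt_of_mem h hi ha).1
      have h2 := hAsub hA
      rw [mem_range] at h2
      omega
    refine ⟨subset_union_left, ?_, ?_⟩
    · intro b hb hbB
      rcases mem_union.mp hb with h' | h'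
      · exact absurd h' hbB
      · exact mem_range.mp (hAsub h')
    · rw [card_union_of_disjoint hdisj, card_B h hi, hAcard]
      omega
  · rintro ⟨hBy, hbound, hcard⟩
    simp only [term, mem_image, mem_powersetCard]
    refine ⟨y \ B ks i, ⟨?_, ?_⟩, ?_⟩
    · intro b hb
      rw [mem_sdiff] at hb
      exact mem_range.mpr (hbound b hb.1 hb.2)
    · rw [card_sdiff_of_subset hBy, hcard, card_B h hi]
    · rw [union_sdiff_of_subset hBy]

lemma term_subset_J (h : ∀ i < r, ks (i + 1) < ks i) (hrm : r < m) (hk0n : ks 0 ≤ n)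
    (hrn : 1 ≤ r → ks 0 < n) {i : ℕ} (hi : i ≤ r) :
    term m ks i ⊆ johnsonVerts n m := by
  intro y hy
  rw [mem_term_iff h hrm hi] at hy
  obtain ⟨hBy, hbound, hcard⟩ := hy
  rw [johnsonVerts, mem_powersetCard]
  refine ⟨?_, hcard⟩
  intro b hb
  rw [mem_range]
  by_cases hbB : b ∈ B ks i
  · have h2 := (B_lt_of_mem h hi hbB).2
    rcases Nat.eq_zero_or_pos i with rfl | hipos
    · simp [B] at hbB
    · exact lt_of_le_of_lt h2 (hrn (by omega))
  · have := hbound b hb hbB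
    have h2 : ks i ≤ ks 0 := ks_le h (Nat.zero_le i) hi
    omega

lemma term_disj (h : ∀ i < r, ks (i + 1) < ks i) (hrm : r < m) {i j : ℕ}
    (hij : i < j) (hj : j ≤ r) : Disjoint (term m ks i) (term m ks j) := by
  rw [disjoint_left]
  intro y hyi hyj
  rw [mem_term_iff h hrm (by omega)] at hyi
  rw [mem_term_iff h hrm hj] at hyj
  have hksi : ks i ∈ y := hyj.1 (mem_B.mpr ⟨i, hij, rfl⟩)
  by_cases hksB : ks i ∈ B ks i
  · exact not_mem_B_self h (by omega) hksB
  · exact absurd (hyi.2.1 _ hksi hksB) (lt_irrefl _)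

lemma card_term (h : ∀ i < r, ks (i + 1) < ks i) {i : ℕ} (hi : i ≤ r) :
    (term m ks i).card = (ks i).choose (m - i) := by
  rw [term, card_image_of_injOn, card_powersetCard, card_range]
  intro A hA A' hA' hAA
  simp only [coe_filter, mem_coe, mem_powersetCard, mem_range, Set.mem_setOf_eq] at hA hA'
  have key : ∀ C : Finset ℕ, C ⊆ Finset.range (ks i) → (B ks i ∪ C) \ B ks i = C := by
    intro C hC
    rw [union_sdiff_left, Finset.sdiff_eq_self_iff_disjoint, disjoint_left]
    intro a haC haB
    have := (B_lt_of_mem h hi haB).1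
    have := mem_range.mp (hC haC)
    omega
  have h2 := congrArg (fun s => s \ B ks i) hAA
  simpa only [key A hA.1, key A' hA'.1] using h2

lemma card_Iexp (h : ∀ i < r, ks (i + 1) < ks i) (hrm : r < m)
    (hksum : k = ∑ i ∈ Finset.range (r + 1), (ks i).choose (m - i)) :
    (Iexp m r ks).card = k := by
  rw [Iexp, card_biUnion, hksum]
  · exact Finset.sum_congr rfl fun i hi => card_term h (by simpa [Nat.lt_succ_iff] using hi)
  · intro i hi j hj hij
    simp only [coe_range, Set.mem_Iio, Nat.lt_succ_iff] at hi hj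
    rcases Nat.lt_or_ge i j with h' | h'
    · exact term_disj h hrm h' hj
    · exact (term_disj h hrm (by omega) hi).symm


lemma Iexp_subset_J (h : ∀ i < r, ks (i + 1) < ks i) (hrm : r < m) (hk0n : ks 0 ≤ n)
    (hrn : 1 ≤ r → ks 0 < n) : Iexp m r ks ⊆ johnsonVerts n m := by
  rw [Iexp]
  refine biUnion_subset.mpr fun i hi => ?_
  exact term_subset_J h hrm hk0n hrn (by simpa [Nat.lt_succ_iff] using hi)

lemma initSegProp (h : ∀ i < r, ks (i + 1) < ks i) (hrm : r < m)
    {s t : Finset ℕ} (hs : s ∈ Iexp m r ks) (ht : t ∈ johnsonVerts n m)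
    (hts : toColex t < toColex s) : t ∈ Iexp m r ks := by
  classical
  rw [Iexp, mem_biUnion] at hs
  obtain ⟨i, hirange, hsterm⟩ := hs
  rw [mem_range, Nat.lt_succ_iff] at hirange
  rw [mem_term_iff h hrm hirange] at hsterm
  obtain ⟨hBs, hbs, hcards⟩ := hsterm
  rw [Finset.Colex.toColex_lt_toColex_iff_exists_forall_lt] at hts
  obtain ⟨a, has, hat, hfor⟩ := hts
  have tcard : t.card = m := (mem_powersetCard.mp ht).2
  rw [Iexp, mem_biUnion]
  by_cases hBt : B ks i ⊆ t
  · have haB : a ∉ B ks i := fun hmem => hat (hBt hmem)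
    have haki : a < ks i := hbs a has haB
    refine ⟨i, mem_range.mpr (by omega), (mem_term_iff h hrm hirange).mpr ⟨hBt, ?_, tcard⟩⟩
    intro b hb hbB
    by_cases hbs' : b ∈ s
    · exact hbs b hbs' hbB
    · exact lt_trans (hfor b hb hbs') haki
  · have hex : ∃ l, ks l ∉ t ∧ l < i := by
      by_contra hc
      push_neg at hc
      exact hBt fun b hb => by
        rw [mem_B] at hb
        obtain ⟨l, hl, rfl⟩ := hb
        by_contra hbt
        exact absurd hl (by simpa using hc l hbt)
    have hPex : ∃ l, ks l ∉ t := ⟨hex.choose, hex.choose_spec.1⟩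
    set j := Nat.find hPex with hjdef
    have hjP : ks j ∉ t := Nat.find_spec hPex
    have hjlt : j < i :=
      lt_of_le_of_lt (Nat.find_min' hPex hex.choose_spec.1) hex.choose_spec.2
    have hBjt : B ks j ⊆ t := by
      intro b hb
      rw [mem_B] at hb
      obtain ⟨l, hl, rfl⟩ := hb
      by_contra hbt
      exact (Nat.find_min hPex hl) hbt
    have hksij : ks i < ks j := ks_lt h hjlt hirange
    refine ⟨j, mem_range.mpr (by omega), (mem_term_iff h hrm (by omega)).mpr ⟨hBjt, ?_, tcard⟩⟩
    intro b hb hbB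
    by_cases hbs' : b ∈ s
    · by_cases hbBi : b ∈ B ks i
      · rw [mem_B] at hbBi
        obtain ⟨l, hl, rfl⟩ := hbBi
        have hlj : j < l := by
          rcases Nat.lt_or_ge l j with h' | h'
          · exact absurd (mem_B.mpr ⟨l, h', rfl⟩) hbB
          · rcases Nat.eq_or_lt_of_le h' with rfl | h''
            · exact absurd hb hjP
            · omega
        exact ks_lt h hlj (by omega)
      · exact lt_trans (hbs b hbs' hbBi) hksij
    · have hba := hfor b hb hbs'
      by_cases haB : a ∈ B ks i
      · rw [mem_B] at haB
        obtain ⟨l, hl, rfl⟩ := haB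
        have hjl : j ≤ l := by
          by_contra hc
          push_neg at hc
          exact hat (hBjt (mem_B.mpr ⟨l, hc, rfl⟩))
        have := ks_le h hjl (by omega)
        omega
      · have := hbs a has haB
        omega

lemma colexInitSeg_eq (h : ∀ i < r, ks (i + 1) < ks i) (hrm : r < m) (hk0n : ks 0 ≤ n)
    (hrn : 1 ≤ r → ks 0 < n) (hk : 1 ≤ k)
    (hksum : k = ∑ i ∈ Finset.range (r + 1), (ks i).choose (m - i)) :
    colexInitSeg n m k = Iexp m r ks := by
  ext s
  rw [colexInitSeg, mem_filter]
  constructor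
  · rintro ⟨hsJ, hcard⟩
    by_contra hs
    have hsub : Iexp m r ks ⊆
        (johnsonVerts n m).filter fun t => toColex t < toColex s := by
      intro t htI
      have htJ : t ∈ johnsonVerts n m := Iexp_subset_J h hrm hk0n hrn htI
      rw [mem_filter]
      refine ⟨htJ, ?_⟩
      rcases lt_trichotomy (toColex t) (toColex s) with h' | h' | h'
      · exact h'
      · have : t = s := by simpa using h'
        exact absurd (this ▸ htI) hs
      · exact absurd (initSegProp h hrm htI hsJ h') hs
    have := card_le_card hsub
    rw [card_Iexp h hrm hksum] at this
    omega
  · intro hsI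
    have hsJ : s ∈ johnsonVerts n m := Iexp_subset_J h hrm hk0n hrn hsI
    refine ⟨hsJ, ?_⟩
    have hsub : ((johnsonVerts n m).filter fun t =>
        toColex t < toColex s) ⊆ (Iexp m r ks).erase s := by
      intro t htf
      rw [mem_filter] at htf
      rw [mem_erase]
      refine ⟨fun he => ?_, initSegProp h hrm hsI htf.1 htf.2⟩
      exact absurd htf.2 (by simp [he])
    have h1 := card_le_card hsub
    have h2 : ((Iexp m r ks).erase s).card = k - 1 := by
      rw [card_erase_of_mem hsI, card_Iexp h hrm hksum]
    omega

def P0 (m k0 : ℕ) : Finset (Finset ℕ) := (Finset.range k0).powersetCard m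

def P1 (n m k0 : ℕ) : Finset (Finset ℕ) :=
  ((Finset.range n \ Finset.range k0) ×ˢ (Finset.range k0).powersetCard (m - 1)).image
    fun p => insert p.1 p.2

def Fam (n m : ℕ) (ks : ℕ → ℕ) (i : ℕ) : Finset (Finset ℕ) :=
  ((Finset.range n \ Finset.range (ks 0 + 1)) ×ˢ (Finset.range (ks i)).powersetCard (m - 1 - i)).image
    fun p => insert p.1 (B ks i ∪ p.2)

def BallEx (n m r : ℕ) (ks : ℕ → ℕ) : Finset (Finset ℕ) :=
  (P0 m (ks 0) ∪ P1 n m (ks 0)) ∪ (Finset.Icc 1 r).biUnion (Fam n m ks)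

lemma insert_inj_big {z w c : ℕ} {A C : Finset ℕ} (hA : ∀ a ∈ A, a < c) (hC : ∀ a ∈ C, a < c)
    (hz : c ≤ z) (hw : c ≤ w) (he : insert z A = insert w C) : z = w ∧ A = C := by
  have hzw : z = w := by
    have h1 : z ∈ insert w C := he ▸ mem_insert_self z A
    rcases mem_insert.mp h1 with h' | h'
    · exact h'
    · exact absurd (hC z h') (by omega)
  subst hzw
  refine ⟨rfl, ?_⟩
  ext a
  constructor
  · intro ha
    have h1 : a ∈ insert z C := he ▸ mem_insert_of_mem ha
    rcases mem_insert.mp h1 with h' | h'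
    · exact absurd (hA a ha) (by omega)
    · exact h'
  · intro ha
    have h1 : a ∈ insert z A := he.symm ▸ mem_insert_of_mem ha
    rcases mem_insert.mp h1 with h' | h'
    · exact absurd (hC a ha) (by omega)
    · exact h'

lemma B_union_sdiff (h : ∀ i < r, ks (i + 1) < ks i) {i : ℕ} (hi : i ≤ r)
    {A : Finset ℕ} (hA : A ⊆ Finset.range (ks i)) : (B ks i ∪ A) \ B ks i = A := by
  rw [union_sdiff_left, Finset.sdiff_eq_self_iff_disjoint, disjoint_left]
  intro a haC haB
  have := (B_lt_of_mem h hi haB).1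
  have := mem_range.mp (hA haC)
  omega

lemma card_P0 {k0 : ℕ} : (P0 m k0).card = k0.choose m := by
  rw [P0, card_powersetCard, card_range]

lemma card_P1 {k0 : ℕ} (hk0n : k0 ≤ n) :
    (P1 n m k0).card = (n - k0) * k0.choose (m - 1) := by
  rw [P1, card_image_of_injOn, card_product, card_sdiff_of_subset (by exact range_subset_range.mpr hk0n),
    card_range, card_range, card_powersetCard, card_range]
  rintro ⟨z, A⟩ hp ⟨w, C⟩ hq he
  simp only [coe_product, Set.mem_prod, mem_coe, mem_sdiff, mem_range, mem_powersetCard] at hp hq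
  have := insert_inj_big (c := k0) (fun a ha => mem_range.mp (hp.2.1 ha))
    (fun a ha => mem_range.mp (hq.2.1 ha)) (by omega) (by omega) he
  exact Prod.ext this.1 this.2

lemma card_Fam (h : ∀ i < r, ks (i + 1) < ks i) (hrn : 1 ≤ r → ks 0 < n)
    {i : ℕ} (hi : i ≤ r) (hi1 : 1 ≤ i) :
    (Fam n m ks i).card = (n - (ks 0 + 1)) * (ks i).choose (m - 1 - i) := by
  have hksik0 : ks i ≤ ks 0 := ks_le h (Nat.zero_le i) hi
  have hBA : ∀ C : Finset ℕ, C ⊆ Finset.range (ks i) → ∀ a ∈ B ks i ∪ C, a < ks 0 + 1 := by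
    intro C hC a ha
    rcases mem_union.mp ha with h' | h'
    · have := (B_lt_of_mem h hi h').2; omega
    · have := mem_range.mp (hC h'); omega
  have hk01n : ks 0 + 1 ≤ n := hrn (by omega)
  rw [Fam, card_image_of_injOn, card_product, card_sdiff_of_subset (range_subset_range.mpr hk01n),
    card_range, card_range, card_powersetCard, card_range]
  rintro ⟨z, A⟩ hp ⟨w, C⟩ hq he
  simp only [coe_product, Set.mem_prod, mem_coe, mem_sdiff, mem_range, mem_powersetCard] at hp hq
  have key := insert_inj_big (c := ks 0 + 1) (hBA A hp.2.1) (hBA C hq.2.1)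
    (by omega) (by omega) he
  have hAC : A = C := by
    have h1 := congrArg (fun s => s \ B ks i) key.2
    simpa only [B_union_sdiff h hi hp.2.1, B_union_sdiff h hi hq.2.1] using h1
  exact Prod.ext key.1 hAC


lemma P0_out {k0 : ℕ} {y : Finset ℕ} (hy : y ∈ P0 m k0) : y \ Finset.range k0 = ∅ := by
  rw [P0, mem_powersetCard] at hy
  rw [sdiff_eq_empty_iff_subset]
  exact hy.1

lemma P1_out {k0 : ℕ} {y : Finset ℕ} (hy : y ∈ P1 n m k0) : (y \ Finset.range k0).card = 1 := by
  rw [P1, mem_image] at hy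
  obtain ⟨⟨z, A⟩, hp, rfl⟩ := hy
  rw [mem_product, mem_sdiff, mem_powersetCard] at hp
  have : insert z A \ Finset.range k0 = {z} := by
    ext a
    simp only [mem_sdiff, mem_insert, mem_singleton, mem_range]
    constructor
    · rintro ⟨h1 | h1, h2⟩
      · exact h1
      · exact absurd (mem_range.mp (hp.2.1 h1)) h2
    · rintro rfl
      exact ⟨Or.inl rfl, by simpa using hp.1.2⟩
  rw [this, card_singleton]

lemma Fam_out (h : ∀ i < r, ks (i + 1) < ks i) {i : ℕ} (hi : i ≤ r) (hi1 : 1 ≤ i)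
    {y : Finset ℕ} (hy : y ∈ Fam n m ks i) : 2 ≤ (y \ Finset.range (ks 0)).card := by
  rw [Fam, mem_image] at hy
  obtain ⟨⟨z, A⟩, hp, rfl⟩ := hy
  rw [mem_product, mem_sdiff, mem_powersetCard] at hp
  have hz : ks 0 < z := by have := hp.1.2; simp only [mem_range] at this; omega
  have hk0B : ks 0 ∈ B ks i := mem_B.mpr ⟨0, by omega, rfl⟩
  have hsub : ({z, ks 0} : Finset ℕ) ⊆ insert z (B ks i ∪ A) \ Finset.range (ks 0) := by
    intro a ha
    rcases mem_insert.mp ha with rfl | ha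
    · exact mem_sdiff.mpr ⟨mem_insert_self _ _, by simp [mem_range]; omega⟩
    · rw [mem_singleton] at ha
      subst ha
      exact mem_sdiff.mpr ⟨mem_insert_of_mem (mem_union_left _ hk0B), by simp [mem_range]⟩
  have := card_le_card hsub
  rwa [card_pair (by omega)] at this

lemma Fam_ks_not_mem (h : ∀ i < r, ks (i + 1) < ks i) {i : ℕ} (hi : i ≤ r)
    {y : Finset ℕ} (hy : y ∈ Fam n m ks i) : ks i ∉ y := by
  rw [Fam, mem_image] at hy
  obtain ⟨⟨z, A⟩, hp, rfl⟩ := hy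
  rw [mem_product, mem_sdiff, mem_powersetCard] at hp
  have hz : ks 0 < z := by have := hp.1.2; simp only [mem_range] at this; omega
  have hksik0 : ks i ≤ ks 0 := ks_le h (Nat.zero_le i) hi
  intro hmem
  rcases mem_insert.mp hmem with h' | h'
  · omega
  · rcases mem_union.mp h' with h' | h'
    · rw [mem_B] at h'
      obtain ⟨l, hl, he⟩ := h'
      have := ks_lt h hl hi
      omega
    · have := mem_range.mp (hp.2.1 h')
      omega

lemma Fam_ks_mem (h : ∀ i < r, ks (i + 1) < ks i) {i j : ℕ} (hij : i < j) (hj : j ≤ r)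
    {y : Finset ℕ} (hy : y ∈ Fam n m ks j) : ks i ∈ y := by
  rw [Fam, mem_image] at hy
  obtain ⟨⟨z, A⟩, hp, rfl⟩ := hy
  exact mem_insert_of_mem (mem_union_left _ (mem_B.mpr ⟨i, hij, rfl⟩))

lemma card_BallEx (h : ∀ i < r, ks (i + 1) < ks i) (hrn : 1 ≤ r → ks 0 < n) (hk0n : ks 0 ≤ n) :
    (BallEx n m r ks).card = (ks 0).choose m + (n - ks 0) * (ks 0).choose (m - 1)
      + ∑ i ∈ Finset.Icc 1 r, (n - (ks 0 + 1)) * (ks i).choose (m - 1 - i) := by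
  have hd1 : Disjoint (P0 m (ks 0)) (P1 n m (ks 0)) := by
    rw [disjoint_left]
    intro y hy0 hy1
    have h0 := P0_out hy0
    have h1 := P1_out hy1
    rw [h0] at h1
    simp at h1
  have hd2 : Disjoint (P0 m (ks 0) ∪ P1 n m (ks 0)) ((Finset.Icc 1 r).biUnion (Fam n m ks)) := by
    rw [disjoint_left]
    intro y hy01 hyF
    rw [mem_biUnion] at hyF
    obtain ⟨i, hi, hyF⟩ := hyF
    rw [Finset.mem_Icc] at hi
    have h2 := Fam_out h hi.2 hi.1 hyF
    rcases mem_union.mp hy01 with h' | h'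
    · rw [P0_out h'] at h2
      simp at h2
    · rw [P1_out h'] at h2
      omega
  rw [BallEx, card_union_of_disjoint hd2, card_union_of_disjoint hd1, card_P0, card_P1 hk0n,
    card_biUnion]
  · congr 1
    exact Finset.sum_congr rfl fun i hi => by
      rw [Finset.mem_Icc] at hi
      exact card_Fam h hrn hi.2 hi.1
  · intro i hi j hj hij
    rw [Finset.mem_coe, Finset.mem_Icc] at hi hj
    rw [Function.onFun, disjoint_left]
    intro y hyi hyj
    rcases Nat.lt_or_ge i j with h' | h'
    · exact Fam_ks_not_mem h hi.2 hyi (Fam_ks_mem h h' hj.2 hyj)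
    · exact Fam_ks_not_mem h hj.2 hyj (Fam_ks_mem h (by omega) hi.2 hyi)


lemma mem_P0P1_of {k0 : ℕ} {y : Finset ℕ} (hyn : y ⊆ Finset.range n) (hcard : y.card = m)
    (hout : (y \ Finset.range k0).card ≤ 1) : y ∈ P0 m k0 ∪ P1 n m k0 := by
  interval_cases h : (y \ Finset.range k0).card
  · refine mem_union_left _ ?_
    rw [P0, mem_powersetCard]
    exact ⟨sdiff_eq_empty_iff_subset.mp (card_eq_zero.mp h), hcard⟩
  · obtain ⟨w, hw⟩ := card_eq_one.mp h
    have hwmem : w ∈ y ∧ w ∉ Finset.range k0 := by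
      have : w ∈ y \ Finset.range k0 := hw ▸ mem_singleton_self w
      exact ⟨(mem_sdiff.mp this).1, (mem_sdiff.mp this).2⟩
    refine mem_union_right _ ?_
    rw [P1, mem_image]
    refine ⟨(w, y.erase w), ?_, ?_⟩
    · rw [mem_product, mem_sdiff, mem_powersetCard]
      refine ⟨⟨hyn hwmem.1, hwmem.2⟩, ?_, ?_⟩
      · intro a ha
        rw [mem_erase] at ha
        by_contra hc
        have : a ∈ y \ Finset.range k0 := mem_sdiff.mpr ⟨ha.2, hc⟩
        rw [hw, mem_singleton] at this
        exact ha.1 this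
      · rw [card_erase_of_mem hwmem.1, hcard]
    · exact insert_erase hwmem.1

lemma mem_Fam_of (h : ∀ i < r, ks (i + 1) < ks i) {j z : ℕ} {A : Finset ℕ} (hj : j ≤ r)
    (hzn : z < n) (hz : ks 0 < z) (hA : A ⊆ Finset.range (ks j)) (hcard : A.card = m - 1 - j) :
    insert z (B ks j ∪ A) ∈ Fam n m ks j := by
  rw [Fam, mem_image]
  refine ⟨(z, A), ?_, rfl⟩
  rw [mem_product, mem_sdiff, mem_powersetCard]
  exact ⟨⟨mem_range.mpr hzn, by rw [mem_range]; omega⟩, hA, hcard⟩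

lemma symmDiff_two {x y : Finset ℕ} (hcard : x.card = y.card) (h2 : (symmDiff x y).card = 2) :
    ∃ u z, u ∈ x ∧ u ∉ y ∧ z ∈ y ∧ z ∉ x ∧ y = insert z (x.erase u) := by
  have hsplit : symmDiff x y = (x \ y) ∪ (y \ x) := by
    ext a
    rw [Finset.mem_symmDiff, mem_union, mem_sdiff, mem_sdiff]
  have hdisj : Disjoint (x \ y) (y \ x) := disjoint_sdiff_sdiff
  have hcc : (x \ y).card = (y \ x).card := card_sdiff_comm hcard
  rw [hsplit, card_union_of_disjoint hdisj] at h2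
  have hx1 : (x \ y).card = 1 := by omega
  have hy1 : (y \ x).card = 1 := by omega
  obtain ⟨u, hu⟩ := card_eq_one.mp hx1
  obtain ⟨z, hz⟩ := card_eq_one.mp hy1
  have hu' : u ∈ x ∧ u ∉ y := by
    have : u ∈ x \ y := hu ▸ mem_singleton_self u
    exact ⟨(mem_sdiff.mp this).1, (mem_sdiff.mp this).2⟩
  have hz' : z ∈ y ∧ z ∉ x := by
    have : z ∈ y \ x := hz ▸ mem_singleton_self z
    exact ⟨(mem_sdiff.mp this).1, (mem_sdiff.mp this).2⟩
  refine ⟨u, z, hu'.1, hu'.2, hz'.1, hz'.2, ?_⟩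
  ext a
  rw [mem_insert, mem_erase]
  constructor
  · intro ha
    by_cases haz : a = z
    · exact Or.inl haz
    · right
      have hax : a ∈ x := by
        by_contra hc
        have : a ∈ y \ x := mem_sdiff.mpr ⟨ha, hc⟩
        rw [hz, mem_singleton] at this
        exact haz this
      exact ⟨fun he => hu'.2 (he ▸ ha), hax⟩
  · rintro (rfl | ⟨hau, hax⟩)
    · exact hz'.1
    · by_contra hc
      have : a ∈ x \ y := mem_sdiff.mpr ⟨hax, hc⟩
      rw [hu, mem_singleton] at this
      exact hau this

lemma symmDiff_insert_insert {a b : ℕ} {s : Finset ℕ} (hab : a ≠ b) (ha : a ∉ s) (hb : b ∉ s) :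
    symmDiff (insert a s) (insert b s) = {a, b} := by
  ext c
  rw [Finset.mem_symmDiff]
  simp only [mem_insert, mem_singleton]
  constructor
  · rintro (⟨h1 | h1, h2⟩ | ⟨h1 | h1, h2⟩)
    · exact Or.inl h1
    · exact absurd (Or.inr h1) h2
    · exact Or.inr h1
    · exact absurd (Or.inr h1) h2
  · rintro (rfl | rfl)
    · exact Or.inl ⟨Or.inl rfl, by rintro (rfl | hc) <;> [exact hab rfl; exact ha hc]⟩
    · exact Or.inr ⟨Or.inl rfl, by rintro (rfl | hc) <;> [exact hab rfl; exact hb hc]⟩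


lemma mem_ball_of {S : Finset (Finset ℕ)} {y x : Finset ℕ} (hyJ : y ∈ johnsonVerts n m)
    (hx : x ∈ S) (hxy : x = y ∨ (symmDiff x y).card = 2) : y ∈ S ∪ boundary n m S := by
  by_cases hyS : y ∈ S
  · exact mem_union_left _ hyS
  · refine mem_union_right _ ?_
    rw [boundary, mem_filter]
    rcases hxy with rfl | h2
    · exact absurd hx hyS
    · exact ⟨hyJ, hyS, x, hx, h2⟩

lemma Iexp_subset_P0P1 (h : ∀ i < r, ks (i + 1) < ks i) (hrm : r < m)
    (hk0n : ks 0 ≤ n) (hrn : 1 ≤ r → ks 0 < n)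
    {y : Finset ℕ} (hy : y ∈ Iexp m r ks) (hyn : y ⊆ Finset.range n) :
    y ∈ P0 m (ks 0) ∪ P1 n m (ks 0) := by
  rw [Iexp, mem_biUnion] at hy
  obtain ⟨i, hi, hy⟩ := hy
  rw [mem_range, Nat.lt_succ_iff] at hi
  rw [mem_term_iff h hrm hi] at hy
  obtain ⟨hBy, hbound, hcard⟩ := hy
  refine mem_P0P1_of hyn hcard ?_
  have hsub : y \ Finset.range (ks 0) ⊆ {ks 0} := by
    intro a ha
    rw [mem_sdiff, mem_range] at ha
    rw [mem_singleton]
    by_cases haB : a ∈ B ks i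
    · have := (B_lt_of_mem h hi haB).2
      omega
    · have := hbound a ha.1 haB
      have := ks_le h (Nat.zero_le i) hi
      omega
  calc (y \ Finset.range (ks 0)).card ≤ ({ks 0} : Finset ℕ).card := card_le_card hsub
    _ = 1 := card_singleton _

lemma boundary_subset_BallEx (h : ∀ i < r, ks (i + 1) < ks i) (hrm : r < m)
    (hk0n : ks 0 ≤ n) (hrn : 1 ≤ r → ks 0 < n)
    {y : Finset ℕ} (hy : y ∈ boundary n m (Iexp m r ks)) : y ∈ BallEx n m r ks := by
  rw [boundary, mem_filter] at hy
  obtain ⟨hyJ, hyI, x, hxI, hxy2⟩ := hy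
  rw [johnsonVerts, mem_powersetCard] at hyJ
  obtain ⟨hyn, hycard⟩ := hyJ
  rw [Iexp, mem_biUnion] at hxI
  obtain ⟨i, hi, hxI⟩ := hxI
  rw [mem_range, Nat.lt_succ_iff] at hi
  rw [mem_term_iff h hrm hi] at hxI
  obtain ⟨hBx, hbound, hxcard⟩ := hxI
  obtain ⟨u, z, hux, huy, hzy, hzx, hyform⟩ := symmDiff_two (by rw [hxcard, hycard]) hxy2
  by_cases hz : z ≤ ks 0
  · -- y has at most one element ≥ ks 0, namely ks 0 itself
    refine mem_union_left _ (mem_P0P1_of hyn hycard ?_)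
    have hsub : y \ Finset.range (ks 0) ⊆ {ks 0} := by
      intro a ha
      rw [mem_sdiff, mem_range] at ha
      rw [mem_singleton]
      have hay : a ∈ y := ha.1
      rw [hyform, mem_insert, mem_erase] at hay
      rcases hay with rfl | ⟨hau, hax⟩
      · have := hyn ha.1
        omega
      · by_cases haB : a ∈ B ks i
        · have := (B_lt_of_mem h hi haB).2
          omega
        · have := hbound a hax haB
          have := ks_le h (Nat.zero_le i) hi
          omega
    calc (y \ Finset.range (ks 0)).card ≤ ({ks 0} : Finset ℕ).card := card_le_card hsub
      _ = 1 := card_singleton _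
  · push_neg at hz
    -- find j: B j ⊆ x.erase u with bound < ks j
    have hcore : ∃ j ≤ r, B ks j ⊆ x.erase u ∧ ∀ a ∈ x.erase u, a ∉ B ks j → a < ks j := by
      by_cases hu : u ∈ B ks i
      · rw [mem_B] at hu
        obtain ⟨j, hji, rfl⟩ := hu
        refine ⟨j, by omega, ?_, ?_⟩
        · intro a ha
          rw [mem_erase]
          rw [mem_B] at ha
          obtain ⟨l, hl, rfl⟩ := ha
          refine ⟨ne_of_gt (ks_lt h hl (by omega)), hBx (mem_B.mpr ⟨l, by omega, rfl⟩)⟩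
        · intro a ha haB
          rw [mem_erase] at ha
          by_cases haBi : a ∈ B ks i
          · rw [mem_B] at haBi
            obtain ⟨l, hl, rfl⟩ := haBi
            have hlj : j < l := by
              rcases Nat.lt_or_ge l j with h' | h'
              · exact absurd (mem_B.mpr ⟨l, h', rfl⟩) haB
              · rcases Nat.eq_or_lt_of_le h' with rfl | h''
                · exact absurd rfl ha.1
                · omega
            exact ks_lt h hlj (by omega)
          · exact lt_trans (hbound a ha.2 haBi) (ks_lt h hji hi)
      · refine ⟨i, hi, ?_, ?_⟩
        · intro a ha
          rw [mem_erase]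
          exact ⟨fun he => hu (he ▸ ha), hBx ha⟩
        · intro a ha haB
          rw [mem_erase] at ha
          exact hbound a ha.2 haB
    obtain ⟨j, hjr, hBj, hbnd⟩ := hcore
    have hecard : (x.erase u).card = m - 1 := by rw [card_erase_of_mem hux, hxcard]
    set A := x.erase u \ B ks j with hA
    have hAsub : A ⊆ Finset.range (ks j) := by
      intro a ha
      rw [hA, mem_sdiff] at ha
      exact mem_range.mpr (hbnd a ha.1 ha.2)
    have hAcard : A.card = m - 1 - j := by
      rw [hA, card_sdiff_of_subset hBj, hecard, card_B h hjr]
    have hyform' : y = insert z (B ks j ∪ A) := by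
      rw [hyform, hA, union_sdiff_of_subset hBj]
    rcases Nat.eq_zero_or_pos j with rfl | hj1
    · -- j = 0 : at most one element ≥ ks 0, namely z
      refine mem_union_left _ (mem_P0P1_of hyn hycard ?_)
      have hsub : y \ Finset.range (ks 0) ⊆ {z} := by
        intro a ha
        rw [mem_sdiff, mem_range] at ha
        rw [mem_singleton]
        have hay : a ∈ y := ha.1
        rw [hyform', mem_insert] at hay
        rcases hay with rfl | hay
        · rfl
        · rcases mem_union.mp hay with h' | h'
          · simp [B] at h'
          · have := mem_range.mp (hAsub h')
            omega
      calc (y \ Finset.range (ks 0)).card ≤ ({z} : Finset ℕ).card := card_le_card hsub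
        _ = 1 := card_singleton _
    · refine mem_union_right _ (mem_biUnion.mpr ⟨j, Finset.mem_Icc.mpr ⟨hj1, hjr⟩, ?_⟩)
      rw [hyform']
      exact mem_Fam_of h hjr (mem_range.mp (hyn (hyform' ▸ mem_insert_self z _))) hz hAsub hAcard


lemma exists_new (c : ℕ) (A : Finset ℕ) (hc : A.card < c) :
    ∃ v, v ∈ Finset.range c ∧ v ∉ A := by
  have h1 : 0 < (Finset.range c \ A).card := by
    have := Finset.le_card_sdiff A (Finset.range c)
    rw [card_range] at this
    omega
  obtain ⟨v, hv⟩ := card_pos.mp h1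
  rw [mem_sdiff] at hv
  exact ⟨v, hv.1, hv.2⟩

lemma P0_subset_Iexp (h : ∀ i < r, ks (i + 1) < ks i) (hrm : r < m)
    {y : Finset ℕ} (hy : y ∈ P0 m (ks 0)) : y ∈ Iexp m r ks := by
  rw [P0, mem_powersetCard] at hy
  rw [Iexp, mem_biUnion]
  refine ⟨0, mem_range.mpr (by omega), (mem_term_iff h hrm (Nat.zero_le r)).mpr ⟨?_, ?_, hy.2⟩⟩
  · simp [B]
  · intro b hb _
    exact mem_range.mp (hy.1 hb)

lemma P1_subset_ball (h : ∀ i < r, ks (i + 1) < ks i) (hrm : r < m) (hm : 1 ≤ m)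
    (hk0m : m ≤ ks 0) (hk0n : ks 0 ≤ n)
    {y : Finset ℕ} (hy : y ∈ P1 n m (ks 0)) :
    y ∈ Iexp m r ks ∪ boundary n m (Iexp m r ks) := by
  rw [P1, mem_image] at hy
  obtain ⟨⟨w, A⟩, hp, rfl⟩ := hy
  rw [mem_product, mem_sdiff, mem_powersetCard] at hp
  obtain ⟨⟨hwn, hwk0⟩, hAsub, hAcard⟩ := hp
  rw [mem_range] at hwn hwk0
  push_neg at hwk0
  have hwA : w ∉ A := fun hc => by have := mem_range.mp (hAsub hc); omega
  obtain ⟨v, hvr, hvA⟩ := exists_new (ks 0) A (by rw [hAcard]; omega)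
  rw [mem_range] at hvr
  have hyJ : insert w A ∈ johnsonVerts n m := by
    rw [johnsonVerts, mem_powersetCard]
    constructor
    · intro a ha
      rcases mem_insert.mp ha with rfl | ha
      · exact mem_range.mpr hwn
      · have := mem_range.mp (hAsub ha)
        rw [mem_range]
        omega
    · rw [card_insert_of_notMem hwA, hAcard]
      omega
  have hxI : insert v A ∈ Iexp m r ks := by
    rw [Iexp, mem_biUnion]
    refine ⟨0, mem_range.mpr (by omega), (mem_term_iff h hrm (Nat.zero_le r)).mpr ⟨?_, ?_, ?_⟩⟩
    · simp [B]
    · intro b hb _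
      rcases mem_insert.mp hb with rfl | hb
      · exact hvr
      · exact mem_range.mp (hAsub hb)
    · rw [card_insert_of_notMem hvA, hAcard]
      omega
  refine mem_ball_of hyJ hxI (Or.inr ?_)
  rw [symmDiff_insert_insert (by omega) hvA hwA, card_pair (by omega : v ≠ w)]

lemma Fam_subset_ball (h : ∀ i < r, ks (i + 1) < ks i) (hrm : r < m) (hm : 1 ≤ m)
    (hge : m - r ≤ ks r) (hk0n : ks 0 ≤ n) (hrn : 1 ≤ r → ks 0 < n)
    {i : ℕ} (hi : i ≤ r) (hi1 : 1 ≤ i)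
    {y : Finset ℕ} (hy : y ∈ Fam n m ks i) :
    y ∈ Iexp m r ks ∪ boundary n m (Iexp m r ks) := by
  rw [Fam, mem_image] at hy
  obtain ⟨⟨z, A⟩, hp, rfl⟩ := hy
  rw [mem_product, mem_sdiff, mem_powersetCard] at hp
  obtain ⟨⟨hzn, hzk0⟩, hAsub, hAcard⟩ := hp
  rw [mem_range] at hzn hzk0
  push_neg at hzk0
  have hk0ltn : ks 0 < n := hrn (by omega)
  have hksi : m - i ≤ ks i := ks_ge h hge hi
  have hksik0 : ks i ≤ ks 0 := ks_le h (Nat.zero_le i) hi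
  have hdisjBA : Disjoint (B ks i) A := by
    rw [disjoint_left]
    intro a haB haA
    have := (B_lt_of_mem h hi haB).1
    have := mem_range.mp (hAsub haA)
    omega
  have hzBA : z ∉ B ks i ∪ A := by
    intro hc
    rcases mem_union.mp hc with h' | h'
    · have := (B_lt_of_mem h hi h').2; omega
    · have := mem_range.mp (hAsub h'); omega
  have hBAcard : (B ks i ∪ A).card = m - 1 := by
    rw [card_union_of_disjoint hdisjBA, card_B h hi, hAcard]
    omega
  obtain ⟨v, hvr, hvA⟩ := exists_new (ks i) A (by rw [hAcard]; omega)
  rw [mem_range] at hvr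
  have hvBA : v ∉ B ks i ∪ A := by
    intro hc
    rcases mem_union.mp hc with h' | h'
    · have := (B_lt_of_mem h hi h').1; omega
    · exact hvA h'
  have hyJ : insert z (B ks i ∪ A) ∈ johnsonVerts n m := by
    rw [johnsonVerts, mem_powersetCard]
    constructor
    · intro a ha
      rw [mem_range]
      rcases mem_insert.mp ha with rfl | ha
      · exact hzn
      · rcases mem_union.mp ha with h' | h'
        · have := (B_lt_of_mem h hi h').2; omega
        · have := mem_range.mp (hAsub h'); omega
    · rw [card_insert_of_notMem hzBA, hBAcard]
      omega
  have hxI : insert v (B ks i ∪ A) ∈ Iexp m r ks := by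
    rw [Iexp, mem_biUnion]
    refine ⟨i, mem_range.mpr (by omega), (mem_term_iff h hrm hi).mpr ⟨?_, ?_, ?_⟩⟩
    · exact fun a ha => mem_insert_of_mem (mem_union_left _ ha)
    · intro b hb hbB
      rcases mem_insert.mp hb with rfl | hb
      · exact hvr
      · rcases mem_union.mp hb with h' | h'
        · exact absurd h' hbB
        · exact mem_range.mp (hAsub h')
    · rw [card_insert_of_notMem hvBA, hBAcard]
      omega
  refine mem_ball_of hyJ hxI (Or.inr ?_)
  rw [symmDiff_insert_insert (by omega) hvBA hzBA, card_pair (by omega : v ≠ z)]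

lemma ball_eq (h : ∀ i < r, ks (i + 1) < ks i) (hrm : r < m) (hm : 1 ≤ m)
    (hge : m - r ≤ ks r) (hk0n : ks 0 ≤ n) (hrn : 1 ≤ r → ks 0 < n) :
    Iexp m r ks ∪ boundary n m (Iexp m r ks) = BallEx n m r ks := by
  have hk0m : m ≤ ks 0 := by
    have := ks_ge h hge (Nat.zero_le r)
    omega
  apply Finset.Subset.antisymm
  · apply union_subset
    · intro y hy
      have hyJ := Iexp_subset_J h hrm hk0n hrn hy
      rw [johnsonVerts, mem_powersetCard] at hyJ
      exact mem_union_left _ (Iexp_subset_P0P1 h hrm hk0n hrn hy hyJ.1)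
    · exact fun y hy => boundary_subset_BallEx h hrm hk0n hrn hy
  · rw [BallEx]
    apply union_subset
    · apply union_subset
      · exact fun y hy => mem_union_left _ (P0_subset_Iexp h hrm hy)
      · exact fun y hy => P1_subset_ball h hrm hm hk0m hk0n hy
    · intro y hy
      rw [mem_biUnion] at hy
      obtain ⟨i, hi, hy⟩ := hy
      rw [Finset.mem_Icc] at hi
      exact Fam_subset_ball h hrm hm hge hk0n hrn hi.2 hi.1 hy


lemma range_succ_eq_insert_Icc (r : ℕ) : Finset.range (r + 1) = insert 0 (Finset.Icc 1 r) := by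
  ext a
  simp only [mem_range, mem_insert, Finset.mem_Icc]
  omega

lemma choose_le_k (h : ∀ i < r, ks (i + 1) < ks i)
    (hksum : k = ∑ i ∈ Finset.range (r + 1), (ks i).choose (m - i)) :
    (ks 0).choose m ≤ k := by
  rw [hksum]
  have := Finset.single_le_sum (f := fun i => (ks i).choose (m - i))
    (fun i _ => Nat.zero_le _) (mem_range.mpr (Nat.succ_pos r))
  simpa using this

lemma k0_le_n (h : ∀ i < r, ks (i + 1) < ks i) (hm : 1 ≤ m) (hmn : m ≤ n)
    (hkn : k ≤ n.choose m)
    (hksum : k = ∑ i ∈ Finset.range (r + 1), (ks i).choose (m - i)) :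
    ks 0 ≤ n := by
  by_contra hc
  push_neg at hc
  have h1 : (ks 0).choose m ≤ k := choose_le_k h hksum
  obtain ⟨mm, rfl⟩ : ∃ mm, m = mm + 1 := ⟨m - 1, by omega⟩
  have h2 : n.choose (mm + 1) < (n + 1).choose (mm + 1) := by
    rw [Nat.choose_succ_succ']
    have : 0 < n.choose mm := Nat.choose_pos (by omega)
    omega
  have h3 : (n + 1).choose (mm + 1) ≤ (ks 0).choose (mm + 1) :=
    Nat.choose_le_choose _ (by omega)
  omega

lemma k0_lt_n (h : ∀ i < r, ks (i + 1) < ks i) (hm : 1 ≤ m) (hmn : m ≤ n)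
    (hkn : k ≤ n.choose m) (hge : m - r ≤ ks r) (hrm : r < m)
    (hksum : k = ∑ i ∈ Finset.range (r + 1), (ks i).choose (m - i)) :
    1 ≤ r → ks 0 < n := by
  intro hr
  have hk0n := k0_le_n h hm hmn hkn hksum
  rcases Nat.lt_or_ge (ks 0) n with h' | h'
  · exact h'
  · exfalso
    have hk0 : ks 0 = n := by omega
    have hpos : 0 < (ks r).choose (m - r) := Nat.choose_pos hge
    have hsub : ({0, r} : Finset ℕ) ⊆ Finset.range (r + 1) := by
      intro a ha
      rw [mem_range]
      rcases mem_insert.mp ha with rfl | ha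
      · omega
      · rw [mem_singleton] at ha
        omega
    have hbig : (ks 0).choose m + (ks r).choose (m - r) ≤ k := by
      rw [hksum]
      calc (ks 0).choose m + (ks r).choose (m - r)
          = ∑ i ∈ ({0, r} : Finset ℕ), (ks i).choose (m - i) := by
            rw [Finset.sum_pair (by omega : (0 : ℕ) ≠ r)]
            simp
        _ ≤ _ := Finset.sum_le_sum_of_subset hsub
    rw [hk0] at hbig
    omega

theorem main (n m k r : ℕ) (ks : ℕ → ℕ)
    (hm : 1 ≤ m) (hmn : m ≤ n) (hk : 1 ≤ k) (hkn : k ≤ n.choose m)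
    (hrep : IsMBinomialRep m k r ks) :
    ((boundary n m (colexInitSeg n m k)).card : ℤ) = fVal n m r ks := by
  obtain ⟨h, hge, hrm, hksum⟩ := hrep
  have hk0n : ks 0 ≤ n := k0_le_n h hm hmn hkn hksum
  have hrn : 1 ≤ r → ks 0 < n := k0_lt_n h hm hmn hkn hge hrm hksum
  rw [colexInitSeg_eq h hrm hk0n hrn hk hksum]
  have hdisj : Disjoint (Iexp m r ks) (boundary n m (Iexp m r ks)) := by
    rw [disjoint_left]
    intro y hyI hyB
    rw [boundary, mem_filter] at hyB
    exact hyB.2.1 hyI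
  have hcards : k + (boundary n m (Iexp m r ks)).card = (BallEx n m r ks).card := by
    rw [← ball_eq h hrm hm hge hk0n hrn, card_union_of_disjoint hdisj,
      card_Iexp h hrm hksum]
  have hBE := card_BallEx (n := n) (m := m) h hrn hk0n
  -- cast everything to ℤ
  have hcast1 : ((n - ks 0 : ℕ) : ℤ) = (n : ℤ) - ks 0 := by
    have := hk0n; push_cast [Nat.cast_sub this]; ring
  have hsum1 : ((∑ i ∈ Finset.Icc 1 r, (n - (ks 0 + 1)) * (ks i).choose (m - 1 - i) : ℕ) : ℤ)
      = ∑ i ∈ Finset.Icc 1 r, ((ks i).choose (m - i - 1) : ℤ) * ((n : ℤ) - ks 0 - 1) := by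
    push_cast
    refine Finset.sum_congr rfl fun i hi => ?_
    rw [Finset.mem_Icc] at hi
    have hr1 : 1 ≤ r := le_trans hi.1 hi.2
    have h1 : ks 0 + 1 ≤ n := hrn hr1
    have h2 : m - 1 - i = m - i - 1 := by omega
    rw [h2, Nat.cast_sub h1]
    push_cast
    ring
  have hksumZ : (k : ℤ) = ((ks 0).choose m : ℤ)
      + ∑ i ∈ Finset.Icc 1 r, ((ks i).choose (m - i) : ℤ) := by
    rw [hksum, range_succ_eq_insert_Icc, Finset.sum_insert (by simp)]
    push_cast
    simp
  have hZ : (k : ℤ) + ((boundary n m (Iexp m r ks)).card : ℤ)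
      = ((ks 0).choose m : ℤ) + ((n : ℤ) - ks 0) * ((ks 0).choose (m - 1) : ℤ)
        + ∑ i ∈ Finset.Icc 1 r, ((ks i).choose (m - i - 1) : ℤ) * ((n : ℤ) - ks 0 - 1) := by
    have := congrArg (fun x : ℕ => (x : ℤ)) hcards
    simp only [hBE] at this
    push_cast at this
    rw [this]
    rw [← hsum1, ← hcast1]
    push_cast
    ring
  rw [fVal]
  rw [Finset.sum_sub_distrib]
  rw [hksumZ] at hZ
  linarith [hZ]


end CBAux

/-- For `1 ≤ m ≤ n`, `1 ≤ k ≤ C(n,m)`, the boundary of the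
initial segment of length `k` in the colex order on `m`-subsets of `[n]`
has cardinality `f(k,n,m)`, where `k = ∑_{i=0}^{r} C(ks i, m-i)` is the
`m`-binomial representation of `k`. -/
theorem card_boundary_colexInitSeg
    (n m k r : ℕ) (ks : ℕ → ℕ)
    (hm : 1 ≤ m) (hmn : m ≤ n) (hk : 1 ≤ k) (hkn : k ≤ n.choose m)
    (hrep : IsMBinomialRep m k r ks) :
    ((boundary n m (colexInitSeg n m k)).card : ℤ) = fVal n m r ks :=
  CBAux.main n m k r ks hm hmn hk hkn hrep
end

section
/- Let 1 ≤ m ≤ n and 1 ≤ k ≤ C(n,m). Then the isoperimetric function of the Johnson graph J(n,m) satisfies μ_{n,m}(k) ≤ f(k,n,m). -/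
open Finset

def Aset (ks : ℕ → ℕ) (i : ℕ) : Finset ℕ := (Finset.range i).image ks

def Sseg (m : ℕ) (ks : ℕ → ℕ) (i : ℕ) : Finset (Finset ℕ) :=
  ((Finset.range (ks i)).powersetCard (m - i)).image (fun B => Aset ks i ∪ B)

def Sfam (m r : ℕ) (ks : ℕ → ℕ) : Finset (Finset ℕ) :=
  (Finset.range (r + 1)).biUnion (Sseg m ks)

def Tzero (n m : ℕ) (ks : ℕ → ℕ) : Finset (Finset ℕ) :=
  (((Finset.range (ks 0)).powersetCard (m - 1)) ×ˢ (Finset.Ico (ks 0) n)).image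
    (fun p => insert p.2 p.1)

def Tseg (n m : ℕ) (ks : ℕ → ℕ) (i : ℕ) : Finset (Finset ℕ) :=
  (((Finset.range (ks i)).powersetCard (m - i - 1)) ×ˢ (Finset.Ico (ks 0 + 1) n)).image
    (fun p => insert p.2 (Aset ks i ∪ p.1))

section Aux
variable {r : ℕ} {ks : ℕ → ℕ}

lemma ks_lt (hanti : ∀ i < r, ks (i + 1) < ks i) :
    ∀ j, j ≤ r → ∀ i, i < j → ks j < ks i := by
  intro j
  induction j with
  | zero => intro _ i hi; exact absurd hi (Nat.not_lt_zero i)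
  | succ j ih =>
    intro hj i hi
    have h1 : ks (j + 1) < ks j := hanti j (by omega)
    rcases Nat.lt_succ_iff_lt_or_eq.mp hi with h | h
    · exact h1.trans (ih (by omega) i h)
    · subst h; exact h1

lemma ks_add (hanti : ∀ i < r, ks (i + 1) < ks i) :
    ∀ j, j ≤ r → ∀ i, i ≤ j → ks j + (j - i) ≤ ks i := by
  intro j
  induction j with
  | zero => intro _ i hi; interval_cases i; simp
  | succ j ih =>
    intro hj i hi
    rcases Nat.lt_succ_iff_lt_or_eq.mp (Nat.lt_succ_of_le hi) with h | h
    · have := ih (by omega) i (by omega)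
      have h1 : ks (j + 1) < ks j := hanti j (by omega)
      omega
    · subst h; simp

lemma mem_Aset {i z : ℕ} : z ∈ Aset ks i ↔ ∃ j < i, ks j = z := by
  simp [Aset]

lemma card_Aset (hanti : ∀ i < r, ks (i + 1) < ks i) {i : ℕ} (hi : i ≤ r) :
    (Aset ks i).card = i := by
  rw [Aset, card_image_of_injOn, card_range]
  intro a ha b hb hab
  simp only [coe_range, Set.mem_Iio] at ha hb
  by_contra hne
  rcases Nat.lt_or_ge a b with h | h
  · have := ks_lt hanti b (by omega) a h; omega
  · have := ks_lt hanti a (by omega) b (by omega); omega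

lemma Aset_mem_le (hanti : ∀ i < r, ks (i + 1) < ks i) {i z : ℕ} (hi : i ≤ r)
    (hz : z ∈ Aset ks i) : z ≤ ks 0 := by
  rcases mem_Aset.mp hz with ⟨j, hj, rfl⟩
  rcases Nat.eq_zero_or_pos j with h | h
  · subst h; exact le_rfl
  · exact le_of_lt (ks_lt hanti j (by omega) 0 h)

lemma Aset_disjoint (hanti : ∀ i < r, ks (i + 1) < ks i) {i : ℕ} (hi : i ≤ r)
    {B : Finset ℕ} (hB : B ⊆ Finset.range (ks i)) : Disjoint (Aset ks i) B := by
  rw [disjoint_left]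
  intro z hz hzB
  rcases mem_Aset.mp hz with ⟨j, hj, rfl⟩
  have h1 : ks i < ks j := ks_lt hanti i hi j hj
  have := mem_range.mp (hB hzB)
  omega

lemma card_Sseg (hanti : ∀ i < r, ks (i + 1) < ks i) {m i : ℕ} (hi : i ≤ r) :
    (Sseg m ks i).card = (ks i).choose (m - i) := by
  rw [Sseg, card_image_of_injOn, card_powersetCard, card_range]
  intro B1 h1 B2 h2 heq
  simp only [Finset.mem_coe, mem_powersetCard] at h1 h2
  have d1 := Aset_disjoint hanti hi h1.1
  have d2 := Aset_disjoint hanti hi h2.1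
  simp only at heq
  have : (Aset ks i ∪ B1) \ Aset ks i = (Aset ks i ∪ B2) \ Aset ks i := by rw [heq]
  rwa [union_sdiff_cancel_left d1, union_sdiff_cancel_left d2] at this


section Aux2
variable {r m n : ℕ} {ks : ℕ → ℕ}

lemma mem_Sseg_elim (hanti : ∀ i < r, ks (i + 1) < ks i) {i : ℕ} (hi : i ≤ r)
    {x : Finset ℕ} (hx : x ∈ Sseg m ks i) :
    ∃ B : Finset ℕ, B ⊆ Finset.range (ks i) ∧ B.card = m - i ∧ x = Aset ks i ∪ B := by
  rcases mem_image.mp hx with ⟨B, hB, rfl⟩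
  rw [mem_powersetCard] at hB
  exact ⟨B, hB.1, hB.2, rfl⟩

/-- every element of a member of `Sseg i` is `≤ ks 0`. -/
lemma Sseg_elt_le (hanti : ∀ i < r, ks (i + 1) < ks i) {i : ℕ} (hi : i ≤ r)
    {x : Finset ℕ} (hx : x ∈ Sseg m ks i) {z : ℕ} (hz : z ∈ x) : z ≤ ks 0 := by
  rcases mem_Sseg_elim hanti hi hx with ⟨B, hB, _, rfl⟩
  rcases mem_union.mp hz with h | h
  · exact Aset_mem_le hanti hi h
  · have := mem_range.mp (hB h)
    have h0 : ks i ≤ ks 0 := by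
      rcases Nat.eq_zero_or_pos i with h' | h'
      · subst h'; exact le_rfl
      · exact le_of_lt (ks_lt hanti i hi 0 h')
    omega

/-- `ks 0 ∈ x` for `x ∈ Sseg i` implies `i ≥ 1`; conversely if `i ≥ 1` then `ks 0 ∈ x`. -/
lemma ks0_mem_Sseg (hanti : ∀ i < r, ks (i + 1) < ks i) {i : ℕ} (hi : i ≤ r)
    {x : Finset ℕ} (hx : x ∈ Sseg m ks i) : ks 0 ∈ x ↔ 1 ≤ i := by
  rcases mem_Sseg_elim hanti hi hx with ⟨B, hB, _, rfl⟩
  constructor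
  · intro h
    rcases mem_union.mp h with h | h
    · rcases mem_Aset.mp h with ⟨j, hj, _⟩; omega
    · have := mem_range.mp (hB h)
      have h0 : ks i ≤ ks 0 := by
        rcases Nat.eq_zero_or_pos i with h' | h'
        · subst h'; exact le_rfl
        · exact le_of_lt (ks_lt hanti i hi 0 h')
      omega
  · intro h
    exact mem_union_left _ (mem_Aset.mpr ⟨0, by omega, rfl⟩)

lemma Sseg_disj (hanti : ∀ i < r, ks (i + 1) < ks i) {i j : ℕ} (hij : i < j) (hj : j ≤ r) :
    Disjoint (Sseg m ks i) (Sseg m ks j) := by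
  rw [disjoint_left]
  intro x hxi hxj
  rcases mem_Sseg_elim hanti (le_of_lt (lt_of_lt_of_le hij hj)) hxi with ⟨B, hB, _, hxeq⟩
  -- ks i ∈ x since i < j
  have hmem : ks i ∈ x := by
    rcases mem_Sseg_elim hanti hj hxj with ⟨B', hB', _, rfl⟩
    exact mem_union_left _ (mem_Aset.mpr ⟨i, hij, rfl⟩)
  rw [hxeq] at hmem
  rcases mem_union.mp hmem with h | h
  · rcases mem_Aset.mp h with ⟨l, hl, hle⟩
    have := ks_lt hanti i (by omega) l hl; omega
  · have := mem_range.mp (hB h); omega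

lemma card_Sfam (hanti : ∀ i < r, ks (i + 1) < ks i) :
    (Sfam m r ks).card = ∑ i ∈ Finset.range (r + 1), (ks i).choose (m - i) := by
  rw [Sfam, card_biUnion]
  · exact Finset.sum_congr rfl fun i hi => card_Sseg hanti (by simpa using Nat.lt_succ_iff.mp (mem_range.mp hi))
  · intro i hi j hj hij
    rcases Nat.lt_or_ge i j with h | h
    · exact Sseg_disj hanti h (Nat.lt_succ_iff.mp (mem_range.mp hj))
    · exact (Sseg_disj hanti (by omega) (Nat.lt_succ_iff.mp (mem_range.mp hi))).symm

end Aux2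

section Aux3
variable {n m k r : ℕ} {ks : ℕ → ℕ}

lemma ks0_le (hm : 1 ≤ m) (hmn : m ≤ n) (hkn : k ≤ n.choose m)
    (hrep : IsMBinomialRep m k r ks) : ks 0 ≤ n := by
  obtain ⟨hanti, hge, hrm, hsum⟩ := hrep
  by_contra hlt
  push_neg at hlt
  have h1 : (ks 0).choose (m - 0) ≤ k := by
    rw [hsum]
    exact Finset.single_le_sum (f := fun i => (ks i).choose (m - i))
      (fun i _ => Nat.zero_le _) (mem_range.mpr (by omega))
  simp only [Nat.sub_zero] at h1
  have h2 : (n + 1).choose m ≤ (ks 0).choose m := Nat.choose_le_choose m (by omega)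
  have h3 : (n + 1).choose m = n.choose (m - 1) + n.choose m := by
    have h3' := Nat.choose_succ_succ n (m - 1)
    have hm1 : (m - 1) + 1 = m := by omega
    simp only [Nat.succ_eq_add_one, hm1] at h3'
    exact h3'
  have h4 : 0 < n.choose (m - 1) := Nat.choose_pos (by omega)
  omega

lemma ks0_lt (hm : 1 ≤ m) (hmn : m ≤ n) (hkn : k ≤ n.choose m)
    (hrep : IsMBinomialRep m k r ks) (hr : 1 ≤ r) : ks 0 < n := by
  have hle := ks0_le hm hmn hkn hrep
  obtain ⟨hanti, hge, hrm, hsum⟩ := hrep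
  rcases Nat.lt_or_ge (ks 0) n with h | h
  · exact h
  have he : ks 0 = n := by omega
  -- k > C(n, m) : contradiction
  have hk1 : (ks 1) ≥ m - 1 := by
    have := ks_add hanti r le_rfl 1 hr
    omega
  have hpos : 0 < (ks 1).choose (m - 1) := Nat.choose_pos (by omega)
  have h1 : (ks 0).choose (m - 0) + (ks 1).choose (m - 1) ≤ k := by
    rw [hsum]
    have : ({0, 1} : Finset ℕ) ⊆ Finset.range (r + 1) := by
      intro z hz; simp at hz; rcases hz with h | h <;> simp [h] <;> omega
    calc (ks 0).choose (m - 0) + (ks 1).choose (m - 1)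
        = ∑ i ∈ ({0, 1} : Finset ℕ), (ks i).choose (m - i) := by
          rw [Finset.sum_pair (by omega)]
      _ ≤ _ := Finset.sum_le_sum_of_subset this
  simp only [Nat.sub_zero, he] at h1
  omega

lemma Sfam_subset (hm : 1 ≤ m) (hmn : m ≤ n) (hkn : k ≤ n.choose m)
    (hrep : IsMBinomialRep m k r ks) :
    Sfam m r ks ⊆ johnsonVerts n m := by
  obtain ⟨hanti, hge, hrm, hsum⟩ := hrep
  intro x hx
  rcases mem_biUnion.mp hx with ⟨i, hi, hxi⟩
  have hir : i ≤ r := Nat.lt_succ_iff.mp (mem_range.mp hi)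
  rcases mem_Sseg_elim hanti hir hxi with ⟨B, hB, hBc, rfl⟩
  rw [johnsonVerts, mem_powersetCard]
  constructor
  · intro z hz
    rw [mem_range]
    rcases mem_union.mp hz with h | h
    · rcases mem_Aset.mp h with ⟨j, hj, rfl⟩
      have hr1 : 1 ≤ r := by omega
      have hk0n : ks 0 < n := ks0_lt hm hmn hkn ⟨hanti, hge, hrm, hsum⟩ hr1
      rcases Nat.eq_zero_or_pos j with h' | h'
      · subst h'; exact hk0n
      · have := ks_lt hanti j (by omega) 0 h'; omega
    · have := mem_range.mp (hB h)
      have h0 : ks i ≤ ks 0 := by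
        rcases Nat.eq_zero_or_pos i with h' | h'
        · subst h'; exact le_rfl
        · exact le_of_lt (ks_lt hanti i hir 0 h')
      have := ks0_le hm hmn hkn ⟨hanti, hge, hrm, hsum⟩
      omega
  · rw [card_union_of_disjoint (Aset_disjoint hanti hir hB), card_Aset hanti hir, hBc]
    omega

lemma card_Sfam_eq (hrep : IsMBinomialRep m k r ks) : (Sfam m r ks).card = k := by
  obtain ⟨hanti, hge, hrm, hsum⟩ := hrep
  rw [card_Sfam hanti, hsum]

end Aux3

section Aux4
variable {n m k r : ℕ} {ks : ℕ → ℕ}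

lemma card_Tzero_le : (Tzero n m ks).card ≤ (ks 0).choose (m - 1) * (n - ks 0) := by
  calc (Tzero n m ks).card
      ≤ (((Finset.range (ks 0)).powersetCard (m - 1)) ×ˢ (Finset.Ico (ks 0) n)).card :=
        card_image_le
    _ = (ks 0).choose (m - 1) * (n - ks 0) := by
        rw [card_product, card_powersetCard, card_range, Nat.card_Ico]

lemma card_Tseg_le {i : ℕ} :
    (Tseg n m ks i).card ≤ (ks i).choose (m - i - 1) * (n - (ks 0 + 1)) := by
  calc (Tseg n m ks i).card
      ≤ (((Finset.range (ks i)).powersetCard (m - i - 1)) ×ˢ (Finset.Ico (ks 0 + 1) n)).card :=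
        card_image_le
    _ = (ks i).choose (m - i - 1) * (n - (ks 0 + 1)) := by
        rw [card_product, card_powersetCard, card_range, Nat.card_Ico]

lemma mem_Tzero_of {y : Finset ℕ} (hy : y ⊆ Finset.range n) (hcard : y.card = m)
    {c : ℕ} (hc : c ∈ y) (hck : ks 0 ≤ c) (hrest : ∀ z ∈ y, z ≠ c → z < ks 0) :
    y ∈ Tzero n m ks := by
  rw [Tzero, mem_image]
  refine ⟨(y.erase c, c), ?_, ?_⟩
  · rw [mem_product]
    constructor
    · rw [mem_powersetCard]
      refine ⟨fun z hz => ?_, ?_⟩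
      · rw [mem_range]
        exact hrest z (mem_of_mem_erase hz) (ne_of_mem_erase hz)
      · rw [card_erase_of_mem hc, hcard]
    · rw [Finset.mem_Ico]
      exact ⟨hck, mem_range.mp (hy hc)⟩
  · exact insert_erase hc

lemma mem_Tseg_of (hanti : ∀ i < r, ks (i + 1) < ks i) {i : ℕ} (hi1 : 1 ≤ i) (hir : i ≤ r)
    {y : Finset ℕ} (hy : y ⊆ Finset.range n) (hcard : y.card = m)
    (hA : Aset ks i ⊆ y) {c : ℕ} (hc : c ∈ y) (hck : ks 0 < c)
    (hrest : ∀ z ∈ y, z ∉ Aset ks i → z ≠ c → z < ks i) :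
    y ∈ Tseg n m ks i := by
  have hcA : c ∉ Aset ks i := fun h => absurd (Aset_mem_le hanti hir h) (by omega)
  have hAe : Aset ks i ⊆ y.erase c := fun z hz =>
    mem_erase.mpr ⟨fun he => hcA (he ▸ hz), hA hz⟩
  rw [Tseg, mem_image]
  refine ⟨((y.erase c) \ Aset ks i, c), ?_, ?_⟩
  · rw [mem_product]
    constructor
    · rw [mem_powersetCard]
      refine ⟨fun z hz => ?_, ?_⟩
      · rw [mem_range]
        rcases mem_sdiff.mp hz with ⟨hz1, hz2⟩
        exact hrest z (mem_of_mem_erase hz1) hz2 (ne_of_mem_erase hz1)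
      · rw [card_sdiff_of_subset hAe, card_erase_of_mem hc, hcard, card_Aset hanti hir]
        omega
    · rw [Finset.mem_Ico]
      exact ⟨hck, mem_range.mp (hy hc)⟩
  · simp only
    rw [union_sdiff_self_eq_union, union_eq_right.mpr hAe, insert_erase hc]

lemma Sseg_subset_Tzero (hanti : ∀ i < r, ks (i + 1) < ks i) (hk0n : ks 0 < n)
    {i : ℕ} (hi1 : 1 ≤ i) (hir : i ≤ r) (him : i ≤ m) :
    Sseg m ks i ⊆ Tzero n m ks := by
  intro x hx
  rcases mem_Sseg_elim hanti hir hx with ⟨B, hB, hBc, rfl⟩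
  have hk0 : ks 0 ∈ Aset ks i ∪ B := mem_union_left _ (mem_Aset.mpr ⟨0, by omega, rfl⟩)
  apply mem_Tzero_of (c := ks 0)
  · intro z hz
    rw [mem_range]
    have := Sseg_elt_le hanti hir hx hz
    omega
  · rw [card_union_of_disjoint (Aset_disjoint hanti hir hB), card_Aset hanti hir, hBc]
    omega
  · exact hk0
  · exact le_rfl
  · intro z hz hzne
    rcases mem_union.mp hz with h | h
    · rcases mem_Aset.mp h with ⟨j, hj, rfl⟩
      have hj0 : j ≠ 0 := fun he => hzne (by rw [he])
      exact ks_lt hanti j (by omega) 0 (by omega)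
    · have := mem_range.mp (hB h)
      have h0 : ks i < ks 0 := ks_lt hanti i hir 0 hi1
      omega

end Aux4

section Aux5
variable {n m k r : ℕ} {ks : ℕ → ℕ}

lemma boundary_cover (hm : 1 ≤ m) (hmn : m ≤ n) (hkn : k ≤ n.choose m)
    (hrep : IsMBinomialRep m k r ks) :
    boundary n m (Sfam m r ks) ⊆
      (Tzero n m ks \ Sfam m r ks) ∪ (Finset.Icc 1 r).biUnion (Tseg n m ks) := by
  obtain ⟨hanti, hge, hrm, hsum⟩ := hrep
  intro y hyb
  rw [boundary, mem_filter] at hyb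
  obtain ⟨hyJ, hyS, x, hxS, hsd⟩ := hyb
  rw [johnsonVerts, mem_powersetCard] at hyJ
  obtain ⟨hysub, hycard⟩ := hyJ
  rcases mem_biUnion.mp hxS with ⟨i, hi, hxi⟩
  have hir : i ≤ r := Nat.lt_succ_iff.mp (mem_range.mp hi)
  rcases mem_Sseg_elim hanti hir hxi with ⟨B, hB, hBc, hxeq⟩
  have hxcard : x.card = m := by
    rw [hxeq, card_union_of_disjoint (Aset_disjoint hanti hir hB), card_Aset hanti hir, hBc]
    omega
  -- extract the two exchanged elements
  have hsymm : symmDiff x y = (x \ y) ∪ (y \ x) := by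
    rw [symmDiff_def, sup_eq_union]
  rw [hsymm, card_union_of_disjoint (disjoint_sdiff_sdiff)] at hsd
  have h11 : (x \ y).card = 1 ∧ (y \ x).card = 1 := by
    have e1 := card_inter_add_card_sdiff x y
    have e2 := card_inter_add_card_sdiff y x
    have e3 : (x ∩ y).card = (y ∩ x).card := by rw [inter_comm]
    omega
  obtain ⟨a, ha⟩ := card_eq_one.mp h11.1
  obtain ⟨b, hb⟩ := card_eq_one.mp h11.2
  have haxy : a ∈ x ∧ a ∉ y := mem_sdiff.mp (ha ▸ mem_singleton_self a)
  have hbyx : b ∈ y ∧ b ∉ x := mem_sdiff.mp (hb ▸ mem_singleton_self b)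
  have hxy : ∀ z ∈ x, z ≠ a → z ∈ y := by
    intro z hz hne
    by_contra hzy
    have : z ∈ x \ y := mem_sdiff.mpr ⟨hz, hzy⟩
    rw [ha, mem_singleton] at this; exact hne this
  have hyx : ∀ z ∈ y, z ≠ b → z ∈ x := by
    intro z hz hne
    by_contra hzx
    have : z ∈ y \ x := mem_sdiff.mpr ⟨hz, hzx⟩
    rw [hb, mem_singleton] at this; exact hne this
  by_cases hex : ∃ c ∈ y, ks 0 ≤ c
  case neg =>
    exfalso; apply hyS
    push_neg at hex
    have hy0 : y ∈ Sseg m ks 0 := by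
      rw [Sseg, mem_image]
      refine ⟨y, ?_, ?_⟩
      · rw [mem_powersetCard]
        exact ⟨fun z hz => mem_range.mpr (hex z hz), by omega⟩
      · simp [Aset]
    exact mem_biUnion.mpr ⟨0, mem_range.mpr (by omega), hy0⟩
  case pos =>
    obtain ⟨c, hcy, hck⟩ := hex
    by_cases huni : ∀ z ∈ y, ks 0 ≤ z → z = c
    · apply mem_union_left
      rw [mem_sdiff]
      refine ⟨mem_Tzero_of hysub hycard hcy hck (fun z hz hzne => ?_), hyS⟩
      by_contra h; push_neg at h
      exact hzne (huni z hz (by omega))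
    · push_neg at huni
      obtain ⟨c', hc'y, hc'k, hc'ne⟩ := huni
      have hxle : ∀ z ∈ x, z ≤ ks 0 := fun z hz => Sseg_elt_le hanti hir hxi hz
      have honeof : ∀ z ∈ y, ks 0 ≤ z → z = b ∨ z = ks 0 := by
        intro z hz hzk
        by_cases hzb : z = b
        · left; exact hzb
        · right
          have hzx : z ∈ x := hyx z hz hzb
          have := hxle z hzx; omega
      have hbne : b ≠ ks 0 := by
        intro he
        rcases honeof c hcy hck with h1 | h1 <;> rcases honeof c' hc'y hc'k with h2 | h2 <;>
          exact hc'ne (by omega)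
      have hk0y : ks 0 ∈ y := by
        rcases honeof c hcy hck with h1 | h1
        · rcases honeof c' hc'y hc'k with h2 | h2
          · exact absurd (by omega : c' = c) hc'ne
          · exact h2 ▸ hc'y
        · exact h1 ▸ hcy
      have hbk : ks 0 < b := by
        rcases honeof c hcy hck with h1 | h1
        · omega
        · rcases honeof c' hc'y hc'k with h2 | h2
          · omega
          · exact absurd (by omega : c' = c) hc'ne
      have hby : b ∈ y := hbyx.1
      have hk0x : ks 0 ∈ x := hyx (ks 0) hk0y (fun he => hbne he.symm)
      have hi1 : 1 ≤ i := (ks0_mem_Sseg hanti hir hxi).mp hk0x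
      have hane : a ≠ ks 0 := fun he => haxy.2 (he ▸ hk0y)
      rcases mem_union.mp (hxeq ▸ haxy.1) with haA | haB
      · -- a = ks j for some 1 ≤ j < i : y ∈ Tseg j
        obtain ⟨j, hji, haj⟩ := mem_Aset.mp haA
        have hj1 : 1 ≤ j := by
          rcases Nat.eq_zero_or_pos j with h' | h'
          · exfalso; apply hane; rw [← haj, h']
          · exact h'
        apply mem_union_right
        refine mem_biUnion.mpr ⟨j, Finset.mem_Icc.mpr ⟨hj1, by omega⟩, ?_⟩
        apply mem_Tseg_of hanti hj1 (by omega) hysub hycard ?_ hby hbk ?_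
        · intro z hz
          rcases mem_Aset.mp hz with ⟨l, hl, rfl⟩
          have hzx : ks l ∈ x := hxeq ▸ mem_union_left _ (mem_Aset.mpr ⟨l, by omega, rfl⟩)
          apply hxy _ hzx
          intro he
          have := ks_lt hanti j (by omega) l hl
          omega
        · intro z hzy hzA hzb
          have hzx : z ∈ x := hyx z hzy hzb
          rw [hxeq] at hzx
          rcases mem_union.mp hzx with h | h
          · rcases mem_Aset.mp h with ⟨l, hl, rfl⟩
            have hlj : ¬ l < j := fun hlt => hzA (mem_Aset.mpr ⟨l, hlt, rfl⟩)
            have hlne : l ≠ j := by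
              intro he; subst he
              exact haxy.2 (haj ▸ hzy)
            exact ks_lt hanti l (by omega) j (by omega)
          · have h1 := mem_range.mp (hB h)
            have h2 : ks i < ks j := ks_lt hanti i hir j (by omega)
            omega
      · -- a ∈ B : y ∈ Tseg i
        apply mem_union_right
        refine mem_biUnion.mpr ⟨i, Finset.mem_Icc.mpr ⟨hi1, hir⟩, ?_⟩
        apply mem_Tseg_of hanti hi1 hir hysub hycard ?_ hby hbk ?_
        · intro z hz
          have hzx : z ∈ x := hxeq ▸ mem_union_left _ hz
          apply hxy _ hzx
          intro he
          exact (disjoint_left.mp (Aset_disjoint hanti hir hB)) hz (he ▸ haB)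
        · intro z hzy hzA hzb
          have hzx : z ∈ x := hyx z hzy hzb
          rw [hxeq] at hzx
          rcases mem_union.mp hzx with h | h
          · exact absurd h hzA
          · exact mem_range.mp (hB h)

end Aux5

/-- For `1 ≤ m ≤ n` and `1 ≤ k ≤ C(n,m)`, the isoperimetric
function of `J(n,m)` satisfies `μ_{n,m}(k) ≤ f(k,n,m)`, where
`k = ∑_{i=0}^{r} C(ks i, m-i)` is the `m`-binomial representation of `k`. -/
theorem mu_le_fVal
    (n m k r : ℕ) (ks : ℕ → ℕ)
    (hm : 1 ≤ m) (hmn : m ≤ n) (hk : 1 ≤ k) (hkn : k ≤ n.choose m)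
    (hrep : IsMBinomialRep m k r ks) :
    (mu n m k : ℤ) ≤ fVal n m r ks := by
  have hanti := hrep.1
  have hrm : r < m := hrep.2.2.1
  have hk0n : ks 0 ≤ n := ks0_le hm hmn hkn hrep
  have hmu : mu n m k ≤ (boundary n m (Sfam m r ks)).card :=
    Nat.sInf_le ⟨Sfam m r ks, Sfam_subset hm hmn hkn hrep, card_Sfam_eq hrep, rfl⟩
  have hcov := boundary_cover hm hmn hkn hrep
  have hbd : (boundary n m (Sfam m r ks)).card ≤
      (Tzero n m ks \ Sfam m r ks).card + ∑ i ∈ Finset.Icc 1 r, (Tseg n m ks i).card := by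
    calc (boundary n m (Sfam m r ks)).card
        ≤ ((Tzero n m ks \ Sfam m r ks) ∪ (Finset.Icc 1 r).biUnion (Tseg n m ks)).card :=
          card_le_card hcov
      _ ≤ (Tzero n m ks \ Sfam m r ks).card
            + ((Finset.Icc 1 r).biUnion (Tseg n m ks)).card := card_union_le _ _
      _ ≤ _ := Nat.add_le_add_left (card_biUnion_le) _
  -- lower bound for the part of Tzero inside Sfam
  have hsub2 : (Finset.Icc 1 r).biUnion (Sseg m ks) ⊆ Tzero n m ks ∩ Sfam m r ks := by
    intro x hx
    rcases mem_biUnion.mp hx with ⟨i, hi, hxi⟩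
    rcases Finset.mem_Icc.mp hi with ⟨h1, h2⟩
    have hk0lt : ks 0 < n := ks0_lt hm hmn hkn hrep (le_trans h1 h2)
    exact mem_inter.mpr ⟨Sseg_subset_Tzero hanti hk0lt h1 h2 (by omega) hxi,
      mem_biUnion.mpr ⟨i, mem_range.mpr (by omega), hxi⟩⟩
  have hdisj : ∀ i ∈ Finset.Icc 1 r, ∀ j ∈ Finset.Icc 1 r, i ≠ j →
      Disjoint (Sseg m ks i) (Sseg m ks j) := by
    intro i hi j hj hij
    rcases Nat.lt_or_ge i j with h | h
    · exact Sseg_disj hanti h (Finset.mem_Icc.mp hj).2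
    · exact (Sseg_disj hanti (by omega) (Finset.mem_Icc.mp hi).2).symm
  have hcard2 : ∑ i ∈ Finset.Icc 1 r, (ks i).choose (m - i)
      ≤ (Tzero n m ks ∩ Sfam m r ks).card := by
    have h1 : ((Finset.Icc 1 r).biUnion (Sseg m ks)).card
        = ∑ i ∈ Finset.Icc 1 r, (Sseg m ks i).card := card_biUnion hdisj
    have h2 : ∑ i ∈ Finset.Icc 1 r, (Sseg m ks i).card
        = ∑ i ∈ Finset.Icc 1 r, (ks i).choose (m - i) :=
      Finset.sum_congr rfl fun i hi => card_Sseg hanti (Finset.mem_Icc.mp hi).2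
    rw [← h2, ← h1]
    exact card_le_card hsub2
  have hT0 : (Tzero n m ks \ Sfam m r ks).card + ∑ i ∈ Finset.Icc 1 r, (ks i).choose (m - i)
      ≤ (ks 0).choose (m - 1) * (n - ks 0) := by
    have h3 := card_sdiff_add_card_inter (Tzero n m ks) (Sfam m r ks)
    have h4 := card_Tzero_le (n := n) (m := m) (ks := ks)
    omega
  -- move to ℤ
  have hZ1 : ((Tzero n m ks \ Sfam m r ks).card : ℤ)
      ≤ ((ks 0).choose (m - 1) : ℤ) * ((n : ℤ) - ks 0)
        - ∑ i ∈ Finset.Icc 1 r, ((ks i).choose (m - i) : ℤ) := by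
    have h := (Nat.cast_le (α := ℤ)).mpr hT0
    push_cast [Nat.cast_sub hk0n] at h
    linarith
  have hZ2 : ∀ i ∈ Finset.Icc 1 r, ((Tseg n m ks i).card : ℤ)
      ≤ ((ks i).choose (m - i - 1) : ℤ) * ((n : ℤ) - ks 0 - 1) := by
    intro i hi
    have h1r : 1 ≤ r := le_trans (Finset.mem_Icc.mp hi).1 (Finset.mem_Icc.mp hi).2
    have hk1n : ks 0 + 1 ≤ n := ks0_lt hm hmn hkn hrep h1r
    have h := (Nat.cast_le (α := ℤ)).mpr (card_Tseg_le (n := n) (m := m) (ks := ks) (i := i))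
    push_cast [Nat.cast_sub hk1n] at h
    linarith
  calc (mu n m k : ℤ) ≤ ((boundary n m (Sfam m r ks)).card : ℤ) := by exact_mod_cast hmu
    _ ≤ ((Tzero n m ks \ Sfam m r ks).card : ℤ)
        + ∑ i ∈ Finset.Icc 1 r, ((Tseg n m ks i).card : ℤ) := by exact_mod_cast hbd
    _ ≤ (((ks 0).choose (m - 1) : ℤ) * ((n : ℤ) - ks 0)
          - ∑ i ∈ Finset.Icc 1 r, ((ks i).choose (m - i) : ℤ))
        + ∑ i ∈ Finset.Icc 1 r, ((ks i).choose (m - i - 1) : ℤ) * ((n : ℤ) - ks 0 - 1) :=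
      add_le_add hZ1 (Finset.sum_le_sum hZ2)
    _ = fVal n m r ks := by
      rw [fVal, Finset.sum_sub_distrib]
      ring
end Aux
end

section
/- Let 1 ≤ m ≤ n, let i, j ∈ [n] with i ≠ j, write T = T_{ij}, and let S be a family of m-element subsets of [n], viewed as vertices of the Johnson graph J(n,m). Then B(T(S)) ⊆ T(B(S)), where B denotes the ball in J(n,m). -/
open Finset

section auxeq
variable {x : Finset ℕ} {i j a b : ℕ}

lemma auxA (hix : i ∈ x) (hjx : j ∉ x) :
    insert i ((insert j (x.erase i)).erase j) = x := by
  ext t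
  by_cases h1 : t = i <;> by_cases h2 : t = j <;>
    simp_all [Finset.mem_insert, Finset.mem_erase]

lemma auxB (hij : i ≠ j) (hix : i ∈ x) (hbj : b ≠ j) (hbi : b ≠ i) :
    insert i ((insert j (x.erase i)).erase b) = insert j (x.erase b) := by
  ext t
  by_cases h1 : t = i <;> by_cases h2 : t = j <;> by_cases h3 : t = b <;>
    simp_all [Finset.mem_insert, Finset.mem_erase]

lemma auxC (hai : a ≠ i) (hbj : b ≠ j) :
    insert j ((insert a (x.erase b)).erase i) = insert a ((insert j (x.erase i)).erase b) := by
  ext t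
  by_cases h1 : t = i <;> by_cases h2 : t = j <;> by_cases h3 : t = a <;>
    by_cases h4 : t = b <;> simp_all [Finset.mem_insert, Finset.mem_erase]

lemma auxD (hjx : j ∉ x) :
    insert a ((insert j (x.erase i)).erase j) = insert a (x.erase i) := by
  rw [Finset.erase_insert (by simp [hjx])]

lemma auxE (hij : i ≠ j) (hjx : j ∈ x) (hix : i ∈ x) (hai : a ≠ i) (haj : a ≠ j) :
    insert j ((insert a (x.erase j)).erase i) = insert a (x.erase i) := by
  ext t
  by_cases h1 : t = i <;> by_cases h2 : t = j <;> by_cases h3 : t = a <;>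
    simp_all [Finset.mem_insert, Finset.mem_erase]

lemma auxF (hix : i ∉ x) (hjx : j ∈ x) :
    insert j ((insert i (x.erase j)).erase i) = x := by
  ext t
  by_cases h1 : t = i <;> by_cases h2 : t = j <;>
    simp_all [Finset.mem_insert, Finset.mem_erase]

lemma auxG (hix : i ∉ x) :
    insert j ((insert i (x.erase b)).erase i) = insert j (x.erase b) := by
  rw [Finset.erase_insert (by simp [hix])]

end auxeq

lemma mem_johnsonVerts {n m : ℕ} {x : Finset ℕ} :
    x ∈ johnsonVerts n m ↔ x ⊆ Finset.range n ∧ x.card = m := Finset.mem_powersetCard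

lemma move_mem_johnsonVerts {n m : ℕ} {x : Finset ℕ} (hx : x ∈ johnsonVerts n m)
    {a b : ℕ} (ha : a ∉ x) (han : a < n) (hb : b ∈ x) :
    insert a (x.erase b) ∈ johnsonVerts n m := by
  rw [mem_johnsonVerts] at hx ⊢
  obtain ⟨hsub, hcard⟩ := hx
  have hm : 0 < x.card := Finset.card_pos.2 ⟨b, hb⟩
  constructor
  · intro t ht
    rcases Finset.mem_insert.1 ht with rfl | ht
    · exact Finset.mem_range.2 han
    · exact hsub (Finset.mem_of_mem_erase ht)
  · rw [Finset.card_insert_of_notMem (fun h => ha (Finset.mem_of_mem_erase h)),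
      Finset.card_erase_of_mem hb]
    omega

lemma card_symmDiff_two {x : Finset ℕ} {a b : ℕ} (ha : a ∉ x) (hb : b ∈ x) (hab : a ≠ b) :
    (symmDiff x (insert a (x.erase b))).card = 2 := by
  have h : symmDiff x (insert a (x.erase b)) = {b, a} := by
    ext t
    simp only [Finset.mem_symmDiff, Finset.mem_insert, Finset.mem_erase, Finset.mem_singleton]
    by_cases h1 : t = a <;> by_cases h2 : t = b <;> simp_all
  rw [h, Finset.card_pair (Ne.symm hab)]

lemma exists_move_of_symmDiff {x z : Finset ℕ} (hc : x.card = z.card)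
    (h : (symmDiff x z).card = 2) :
    ∃ a b, a ∉ x ∧ a ∈ z ∧ b ∈ x ∧ b ∉ z ∧ z = insert a (x.erase b) := by
  have hu : symmDiff x z = (x \ z) ∪ (z \ x) := by rw [symmDiff_def, Finset.sup_eq_union]
  have hd : Disjoint (x \ z) (z \ x) := disjoint_sdiff_sdiff
  have h1 : (x \ z).card + (x ∩ z).card = x.card := Finset.card_sdiff_add_card_inter x z
  have h2 : (z \ x).card + (z ∩ x).card = z.card := Finset.card_sdiff_add_card_inter z x
  have hic : (x ∩ z).card = (z ∩ x).card := by rw [Finset.inter_comm]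
  have hsum : (x \ z).card + (z \ x).card = 2 := by
    rw [← Finset.card_union_of_disjoint hd, ← hu, h]
  have hx1 : (x \ z).card = 1 := by omega
  have hz1 : (z \ x).card = 1 := by omega
  obtain ⟨b, hb⟩ := Finset.card_eq_one.1 hx1
  obtain ⟨a, ha⟩ := Finset.card_eq_one.1 hz1
  have hbx : b ∈ x ∧ b ∉ z := Finset.mem_sdiff.1 (hb ▸ Finset.mem_singleton_self b)
  have haz : a ∈ z ∧ a ∉ x := Finset.mem_sdiff.1 (ha ▸ Finset.mem_singleton_self a)
  refine ⟨a, b, haz.2, haz.1, hbx.1, hbx.2, ?_⟩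
  ext t
  simp only [Finset.mem_insert, Finset.mem_erase]
  constructor
  · intro htz
    by_cases htx : t ∈ x
    · exact Or.inr ⟨fun hteq => hbx.2 (hteq ▸ htz), htx⟩
    · exact Or.inl (by
        have : t ∈ z \ x := Finset.mem_sdiff.2 ⟨htz, htx⟩
        rwa [ha, Finset.mem_singleton] at this)
  · rintro (rfl | ⟨htb, htx⟩)
    · exact haz.1
    · by_contra htz
      have : t ∈ x \ z := Finset.mem_sdiff.2 ⟨htx, htz⟩
      rw [hb, Finset.mem_singleton] at this
      exact htb this

lemma mem_ball_of_adj {n m : ℕ} {S : Finset (Finset ℕ)} {x z : Finset ℕ}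
    (hx : x ∈ S) (hz : z ∈ johnsonVerts n m) (h : (symmDiff x z).card = 2) :
    z ∈ ball n m S := by
  by_cases hzS : z ∈ S
  · exact Finset.mem_union_left _ hzS
  · exact Finset.mem_union_right _ (Finset.mem_filter.2 ⟨hz, hzS, x, hx, h⟩)


/-- For `i ≠ j` in `[n]` and a family `S` of `m`-subsets of `[n]`,
the ball of the shift `T_{ij}(S)` is contained in the shift of the ball:
`B(T_{ij}(S)) ⊆ T_{ij}(B(S))`. -/
theorem ball_shift_subset_shift_ball
    (n m i j : ℕ) (hm : 1 ≤ m) (hmn : m ≤ n)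
    (hi : i < n) (hj : j < n) (hij : i ≠ j)
    (S : Finset (Finset ℕ)) (hS : S ⊆ johnsonVerts n m) :
    ball n m (shift i j S) ⊆ shift i j (ball n m S) := by
  intro z hz
  rw [ball, Finset.mem_union] at hz
  rw [shift, Finset.mem_image]
  rcases hz with hz | hz
  · -- z ∈ shift i j S
    rw [shift, Finset.mem_image] at hz
    obtain ⟨x, hxS, hxz⟩ := hz
    have hxB : x ∈ ball n m S := Finset.mem_union_left _ hxS
    by_cases h1 : i ∈ x ∧ j ∉ x ∧ insert j (x.erase i) ∉ S
    · rw [shiftFun, if_pos h1] at hxz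
      by_cases h2 : insert j (x.erase i) ∈ ball n m S
      · refine ⟨insert j (x.erase i), h2, ?_⟩
        rw [shiftFun, if_neg, hxz]
        rintro ⟨hi', -, -⟩
        simp [Finset.mem_insert, Finset.mem_erase, hij] at hi'
      · exact ⟨x, hxB, by rw [shiftFun, if_pos ⟨h1.1, h1.2.1, h2⟩]; exact hxz⟩
    · rw [shiftFun, if_neg h1] at hxz
      refine ⟨x, hxB, ?_⟩
      rw [shiftFun, if_neg, hxz]
      rintro ⟨hix, hjx, hB⟩
      exact h1 ⟨hix, hjx, fun hmem => hB (Finset.mem_union_left _ hmem)⟩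
  · -- z ∈ boundary of shift
    rw [boundary, Finset.mem_filter] at hz
    obtain ⟨hzJ, hzT, y, hyT, hadj⟩ := hz
    rw [shift, Finset.mem_image] at hyT
    obtain ⟨x, hxS, hxy⟩ := hyT
    have hxJ := hS hxS
    have hix' : i ∉ insert j (x.erase i) := by
      simp [Finset.mem_insert, Finset.mem_erase, hij]
    have hzsub : z ⊆ Finset.range n := (mem_johnsonVerts.1 hzJ).1
    have hzcard : z.card = m := (mem_johnsonVerts.1 hzJ).2
    have hxsub : x ⊆ Finset.range n := (mem_johnsonVerts.1 hxJ).1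
    have hxcard : x.card = m := (mem_johnsonVerts.1 hxJ).2
    by_cases h1 : i ∈ x ∧ j ∉ x ∧ insert j (x.erase i) ∉ S
    · -- y = insert j (x.erase i)
      obtain ⟨hix, hjx, hx'S⟩ := h1
      rw [shiftFun, if_pos ⟨hix, hjx, hx'S⟩] at hxy
      subst hxy
      have hyJ : insert j (x.erase i) ∈ johnsonVerts n m :=
        move_mem_johnsonVerts hxJ hjx hj hix
      have hycard : (insert j (x.erase i)).card = m := (mem_johnsonVerts.1 hyJ).2
      obtain ⟨a, b, haY, haz, hbY, hbz, hzeq⟩ :=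
        exists_move_of_symmDiff (hycard.trans hzcard.symm) hadj
      have hx'B : insert j (x.erase i) ∈ ball n m S :=
        mem_ball_of_adj hxS hyJ (card_symmDiff_two hjx hix (Ne.symm hij))
      by_cases hzij : i ∈ z ∧ j ∉ z
      · -- then a = i, b = j, z = x
        obtain ⟨hiz, hjz⟩ := hzij
        have ha : a = i := by
          rcases Finset.mem_insert.1 (hzeq ▸ hiz) with h | h
          · exact h.symm
          · exact absurd (Finset.mem_of_mem_erase h) hix'
        have hb : b = j := by
          by_contra hne
          exact hjz (hzeq ▸ Finset.mem_insert_of_mem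
            (Finset.mem_erase.2 ⟨fun h => hne h.symm, Finset.mem_insert_self _ _⟩))
        rw [ha, hb] at hzeq
        have hzx : z = x := by rw [hzeq]; exact auxA hix hjx
        refine ⟨z, Finset.mem_union_left _ (hzx ▸ hxS), ?_⟩
        rw [shiftFun, if_neg]
        rintro ⟨-, -, hc⟩
        exact hc (by rw [hzx]; exact hx'B)
      · by_cases hjz : j ∈ z
        · by_cases hiz : i ∈ z
          · -- a = i, z = insert j (x.erase b)
            have ha : a = i := by
              rcases Finset.mem_insert.1 (hzeq ▸ hiz) with h | h
              · exact h.symm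
              · exact absurd (Finset.mem_of_mem_erase h) hix'
            rw [ha] at hzeq
            have hbj : b ≠ j := fun h => hbz (h ▸ hjz)
            have hbi : b ≠ i := fun h => hix' (h ▸ hbY)
            have hbx : b ∈ x := by
              rcases Finset.mem_insert.1 hbY with h | h
              · exact absurd h hbj
              · exact Finset.mem_of_mem_erase h
            have hzeq2 : z = insert j (x.erase b) := by
              rw [hzeq]; exact auxB hij hix hbj hbi
            have hzB : z ∈ ball n m S :=
              mem_ball_of_adj hxS hzJ (hzeq2 ▸ card_symmDiff_two hjx hbx
                (fun h => hbj h.symm))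
            exact ⟨z, hzB, by rw [shiftFun, if_neg]; rintro ⟨-, hc, -⟩; exact hc hjz⟩
          · -- w-trick : w = insert a (x.erase b)
            have haj : a ≠ j := fun h => haY (h ▸ Finset.mem_insert_self _ _)
            have hai : a ≠ i := fun h => hiz (h ▸ haz)
            have hanx : a ∉ x := fun h =>
              haY (Finset.mem_insert_of_mem (Finset.mem_erase.2 ⟨hai, h⟩))
            have hbj : b ≠ j := fun h => hbz (h ▸ hjz)
            have hbi : b ≠ i := fun h => hix' (h ▸ hbY)
            have hbx : b ∈ x := by
              rcases Finset.mem_insert.1 hbY with h | h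
              · exact absurd h hbj
              · exact Finset.mem_of_mem_erase h
            have han : a < n := Finset.mem_range.1 (hzsub haz)
            have hab : a ≠ b := fun h => hbz (h ▸ haz)
            have hwJ : insert a (x.erase b) ∈ johnsonVerts n m :=
              move_mem_johnsonVerts hxJ hanx han hbx
            have hwB : insert a (x.erase b) ∈ ball n m S :=
              mem_ball_of_adj hxS hwJ (card_symmDiff_two hanx hbx hab)
            have hiw : i ∈ insert a (x.erase b) := Finset.mem_insert_of_mem
              (Finset.mem_erase.2 ⟨fun h => hbi h.symm, hix⟩)
            have hjw : j ∉ insert a (x.erase b) := by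
              rintro hjw
              rcases Finset.mem_insert.1 hjw with h | h
              · exact haj h.symm
              · exact hjx (Finset.mem_of_mem_erase h)
            have hwz : insert j ((insert a (x.erase b)).erase i) = z := by
              rw [hzeq]; exact auxC hai hbj
            by_cases hzB : z ∈ ball n m S
            · exact ⟨z, hzB, by rw [shiftFun, if_neg]; rintro ⟨-, hc, -⟩; exact hc hjz⟩
            · refine ⟨insert a (x.erase b), hwB, ?_⟩
              rw [shiftFun, if_pos ⟨hiw, hjw, fun h => hzB (hwz ▸ h)⟩]
              exact hwz
        · -- j ∉ z; then i ∉ z, b = j, z = insert a (x.erase i)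
          have hiz : i ∉ z := fun h => hzij ⟨h, hjz⟩
          have hb : b = j := by
            by_contra hne
            exact hjz (hzeq ▸ Finset.mem_insert_of_mem
              (Finset.mem_erase.2 ⟨fun h => hne h.symm, Finset.mem_insert_self _ _⟩))
          rw [hb] at hzeq
          have hai : a ≠ i := fun h => hiz (h ▸ haz)
          have hanx : a ∉ x := fun h =>
            haY (Finset.mem_insert_of_mem (Finset.mem_erase.2 ⟨hai, h⟩))
          have hzeq2 : z = insert a (x.erase i) := by
            rw [hzeq]; exact auxD hjx
          have hzB : z ∈ ball n m S :=
            mem_ball_of_adj hxS hzJ (hzeq2 ▸ card_symmDiff_two hanx hix hai)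
          exact ⟨z, hzB, by rw [shiftFun, if_neg]; rintro ⟨hc, -, -⟩; exact hiz hc⟩
    · -- y = x
      rw [shiftFun, if_neg h1] at hxy
      subst hxy
      obtain ⟨a, b, haY, haz, hbY, hbz, hzeq⟩ :=
        exists_move_of_symmDiff (hxcard.trans hzcard.symm) hadj
      have hzB : z ∈ ball n m S := mem_ball_of_adj hxS hzJ hadj
      by_cases hzij : i ∈ z ∧ j ∉ z
      · obtain ⟨hiz, hjz⟩ := hzij
        have han : a < n := Finset.mem_range.1 (hzsub haz)
        have hZ'B : insert j (z.erase i) ∈ ball n m S := by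
          by_cases hjx : j ∈ x
          · have hb : b = j := by
              by_contra hne
              exact hjz (hzeq ▸ Finset.mem_insert_of_mem
                (Finset.mem_erase.2 ⟨fun h => hne h.symm, hjx⟩))
            rw [hb] at hzeq
            have haj : a ≠ j := fun h => haY (h ▸ hjx)
            by_cases hix : i ∈ x
            · have hai : a ≠ i := fun h => haY (h ▸ hix)
              have hZ : insert j (z.erase i) = insert a (x.erase i) := by
                rw [hzeq]; exact auxE hij hjx hix hai haj
              rw [hZ]
              exact mem_ball_of_adj hxS (move_mem_johnsonVerts hxJ haY han hix)
                (card_symmDiff_two haY hix hai)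
            · have ha : a = i := by
                rcases Finset.mem_insert.1 (hzeq ▸ hiz) with h | h
                · exact h.symm
                · exact absurd ((Finset.mem_of_mem_erase h)) hix
              rw [ha] at hzeq
              have hZ : insert j (z.erase i) = x := by
                rw [hzeq]; exact auxF hix hjx
              rw [hZ]
              exact Finset.mem_union_left _ hxS
          · by_cases hix : i ∈ x
            · have hx'S : insert j (x.erase i) ∈ S := by
                by_contra hc
                exact h1 ⟨hix, hjx, hc⟩
              have hbi : b ≠ i := fun h => hbz (h ▸ hiz)
              have hbj : b ≠ j := fun h => hjx (h ▸ hbY)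
              have haj : a ≠ j := fun h => hjz (h ▸ haz)
              have hai : a ≠ i := fun h => haY (h ▸ hix)
              have hZ : insert j (z.erase i)
                  = insert a ((insert j (x.erase i)).erase b) := by
                rw [hzeq]; exact auxC hai hbj
              have hx'J : insert j (x.erase i) ∈ johnsonVerts n m :=
                move_mem_johnsonVerts hxJ hjx hj hix
              have hax' : a ∉ insert j (x.erase i) := by
                rintro h
                rcases Finset.mem_insert.1 h with h | h
                · exact haj h
                · exact haY (Finset.mem_of_mem_erase h)
              have hbx' : b ∈ insert j (x.erase i) :=
                Finset.mem_insert_of_mem (Finset.mem_erase.2 ⟨hbi, hbY⟩)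
              have hab : a ≠ b := fun h => hbz (h ▸ haz)
              rw [hZ]
              exact mem_ball_of_adj hx'S (move_mem_johnsonVerts hx'J hax' han hbx')
                (card_symmDiff_two hax' hbx' hab)
            · have ha : a = i := by
                rcases Finset.mem_insert.1 (hzeq ▸ hiz) with h | h
                · exact h.symm
                · exact absurd ((Finset.mem_of_mem_erase h)) hix
              rw [ha] at hzeq
              have hbj : b ≠ j := fun h => hjx (h ▸ hbY)
              have hZ : insert j (z.erase i) = insert j (x.erase b) := by
                rw [hzeq]; exact auxG hix
              rw [hZ]
              exact mem_ball_of_adj hxS (move_mem_johnsonVerts hxJ hjx hj hbY)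
                (card_symmDiff_two hjx hbY (fun h => hbj h.symm))
        refine ⟨z, hzB, ?_⟩
        rw [shiftFun, if_neg]
        rintro ⟨-, -, hc⟩
        exact hc hZ'B
      · exact ⟨z, hzB, by
          rw [shiftFun, if_neg]
          rintro ⟨h1', h2', -⟩
          exact hzij ⟨h1', h2'⟩⟩
end

section
/- Let 1 ≤ m ≤ n, let i, j ∈ [n] with i ≠ j, write T = T_{ij}, and let S be a family of m-element subsets of [n], viewed as vertices of the Johnson graph J(n,m). Then |T(S)| = |S|, |B(T(S))| ≤ |B(S)|, and |∂(T(S))| ≤ |∂S|, where B and ∂ denote the ball and boundary in J(n,m). -/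
open Finset

private lemma aux_sd3 (a b c : Finset ℕ) :
    symmDiff (symmDiff a c) (symmDiff b c) = symmDiff a b := by
  rw [symmDiff_assoc, symmDiff_comm b c, symmDiff_symmDiff_cancel_left]

private lemma aux_sd_swap (a b c : Finset ℕ) :
    symmDiff (symmDiff a c) b = symmDiff (symmDiff a b) c := by
  rw [symmDiff_assoc, symmDiff_assoc, symmDiff_comm c b]

private lemma aux_insert_erase (i j : ℕ) (x : Finset ℕ) (hij : i ≠ j)
    (hix : i ∈ x) (hjx : j ∉ x) : insert j (x.erase i) = symmDiff x {i, j} := by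
  ext a; by_cases h1 : a = i <;> by_cases h2 : a = j <;> simp_all [Finset.mem_symmDiff]

private lemma aux_pair_sd (i j t : ℕ) (hij : i ≠ j) (hti : t ≠ i) (htj : t ≠ j) :
    symmDiff ({i, t} : Finset ℕ) {i, j} = {j, t} := by
  ext a; by_cases h1 : a = i <;> by_cases h2 : a = j <;> by_cases h3 : a = t <;>
    simp_all [Finset.mem_symmDiff]

private lemma aux_pair_sd' (i j t : ℕ) (hij : i ≠ j) (hti : t ≠ i) (htj : t ≠ j) :
    symmDiff ({j, t} : Finset ℕ) {i, j} = {i, t} := by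
  rw [Finset.pair_comm i j]; exact aux_pair_sd j i t (Ne.symm hij) htj hti

private lemma aux_extract (A : Finset ℕ) (hA : A.card = 2) {p : ℕ} (hp : p ∈ A) :
    ∃ t, t ≠ p ∧ A = {p, t} := by
  rw [Finset.card_eq_two] at hA
  obtain ⟨a, b, hab, rfl⟩ := hA
  rcases Finset.mem_insert.1 hp with rfl | hp'
  · exact ⟨b, Ne.symm hab, rfl⟩
  · rw [Finset.mem_singleton] at hp'; subst hp'
    exact ⟨a, hab, Finset.pair_comm a p⟩

private lemma aux_eq_pair (A : Finset ℕ) (hA : A.card = 2) {p q : ℕ} (hp : p ∈ A)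
    (hq : q ∈ A) (hpq : p ≠ q) : A = ({p, q} : Finset ℕ) := by
  obtain ⟨t, htp, rfl⟩ := aux_extract A hA hp
  rcases Finset.mem_insert.1 hq with rfl | hq'
  · exact absurd rfl hpq
  · rw [Finset.mem_singleton] at hq'; subst hq'; rfl

private lemma aux_sd_mem_verts (n m i j : ℕ) (hm : 1 ≤ m) (hi : i < n) (hj : j < n)
    (hij : i ≠ j) {y : Finset ℕ} (hy : y ∈ johnsonVerts n m)
    (h : (i ∈ y ∧ j ∉ y) ∨ (j ∈ y ∧ i ∉ y)) : symmDiff y {i, j} ∈ johnsonVerts n m := by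
  unfold johnsonVerts at hy ⊢
  rw [Finset.mem_powersetCard] at hy ⊢
  obtain ⟨hsub, hcard⟩ := hy
  rcases h with ⟨h1, h2⟩ | ⟨h1, h2⟩
  · rw [← aux_insert_erase i j y hij h1 h2]
    refine ⟨fun a ha => ?_, ?_⟩
    · rcases Finset.mem_insert.1 ha with rfl | ha'
      · exact Finset.mem_range.2 hj
      · exact hsub (Finset.mem_of_mem_erase ha')
    · rw [Finset.card_insert_of_notMem (fun hc => h2 (Finset.mem_of_mem_erase hc)),
        Finset.card_erase_of_mem h1, hcard]
      omega
  · rw [Finset.pair_comm, ← aux_insert_erase j i y (Ne.symm hij) h1 h2]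
    refine ⟨fun a ha => ?_, ?_⟩
    · rcases Finset.mem_insert.1 ha with rfl | ha'
      · exact Finset.mem_range.2 hi
      · exact hsub (Finset.mem_of_mem_erase ha')
    · rw [Finset.card_insert_of_notMem (fun hc => h2 (Finset.mem_of_mem_erase hc)),
        Finset.card_erase_of_mem h1, hcard]
      omega

private lemma aux_shift_card (i j : ℕ) (S : Finset (Finset ℕ)) :
    (shift i j S).card = S.card := by
  apply Finset.card_image_of_injOn
  intro x1 h1 x2 h2 he
  have h1' : x1 ∈ S := h1
  have h2' : x2 ∈ S := h2
  unfold shiftFun at he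
  by_cases ha : i ∈ x1 ∧ j ∉ x1 ∧ insert j (x1.erase i) ∉ S <;>
    by_cases hb : i ∈ x2 ∧ j ∉ x2 ∧ insert j (x2.erase i) ∉ S
  · rw [if_pos ha, if_pos hb] at he
    have hj1 : j ∉ x1.erase i := fun hc => ha.2.1 (Finset.mem_of_mem_erase hc)
    have hj2 : j ∉ x2.erase i := fun hc => hb.2.1 (Finset.mem_of_mem_erase hc)
    have heq : x1.erase i = x2.erase i := by
      have := congrArg (fun s => Finset.erase s j) he
      simpa [Finset.erase_insert hj1, Finset.erase_insert hj2] using this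
    rw [← Finset.insert_erase ha.1, heq, Finset.insert_erase hb.1]
  · rw [if_pos ha, if_neg hb] at he
    rw [← he] at h2'
    exact absurd h2' ha.2.2
  · rw [if_neg ha, if_pos hb] at he
    rw [he] at h1'
    exact absurd h1' hb.2.2
  · rw [if_neg ha, if_neg hb] at he
    exact he

private lemma aux_mem_shift_cases {i j : ℕ} (hij : i ≠ j) {S : Finset (Finset ℕ)}
    {z : Finset ℕ} (hz : z ∈ shift i j S) :
    (z ∈ S ∧ (i ∈ z → j ∉ z → symmDiff z {i, j} ∈ S)) ∨
      (∃ x ∈ S, i ∈ x ∧ j ∉ x ∧ z = symmDiff x {i, j} ∧ symmDiff x {i, j} ∉ S) := by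
  unfold shift at hz
  obtain ⟨x, hx, hfx⟩ := Finset.mem_image.1 hz
  unfold shiftFun at hfx
  by_cases h : i ∈ x ∧ j ∉ x ∧ insert j (x.erase i) ∉ S
  · rw [if_pos h] at hfx
    right
    refine ⟨x, hx, h.1, h.2.1, ?_, ?_⟩
    · rw [← hfx]; exact aux_insert_erase i j x hij h.1 h.2.1
    · rw [← aux_insert_erase i j x hij h.1 h.2.1]; exact h.2.2
  · rw [if_neg h] at hfx
    subst hfx
    left
    refine ⟨hx, fun h1 h2 => ?_⟩
    by_contra hc
    exact h ⟨h1, h2, by rwa [aux_insert_erase i j x hij h1 h2]⟩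
private lemma aux_ball_shift_subset (n m i j : ℕ) (hm : 1 ≤ m) (hi : i < n) (hj : j < n)
    (hij : i ≠ j) (S : Finset (Finset ℕ)) (hS : S ⊆ johnsonVerts n m) :
    ball n m (shift i j S) ⊆ shift i j (ball n m S) := by
  intro y hy
  unfold ball boundary at hy
  set B := ball n m S with hB
  have hSB : S ⊆ B := by rw [hB]; unfold ball; exact Finset.subset_union_left
  have memB : ∀ (w x : Finset ℕ), w ∈ johnsonVerts n m → x ∈ S →
      (symmDiff x w).card = 2 → w ∈ B := by
    intro w x hwv hxS hc
    by_cases hwS : w ∈ S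
    · exact hSB hwS
    · rw [hB]; unfold ball boundary
      exact Finset.mem_union_right _ (Finset.mem_filter.2 ⟨hwv, hwS, x, hxS, hc⟩)
  have himg : ∀ w ∈ B, shiftFun i j B w = y → y ∈ shift i j B := by
    intro w hw he
    unfold shift
    exact Finset.mem_image.2 ⟨w, hw, he⟩
  by_cases hiy : i ∈ y <;> by_cases hjy : j ∈ y
  · -- i ∈ y, j ∈ y : neutral
    refine himg y ?_ (if_neg (fun hc => hc.2.1 hjy))
    rcases Finset.mem_union.1 hy with hyT | hybd
    · rcases aux_mem_shift_cases hij hyT with ⟨hyS, _⟩ | ⟨x, hxS, hix, hjx, hyeq, _⟩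
      · exact hSB hyS
      · exfalso
        rw [hyeq] at hiy
        simp [Finset.mem_symmDiff, hix] at hiy
    · obtain ⟨hyv, hyn, z, hzT, hczy⟩ := Finset.mem_filter.1 hybd
      rcases aux_mem_shift_cases hij hzT with ⟨hzS, _⟩ | ⟨x, hxS, hix, hjx, hzeq, _⟩
      · exact memB y z hyv hzS hczy
      · have hiz : i ∉ z := by rw [hzeq]; simp [Finset.mem_symmDiff, hix]
        have hjz : j ∈ z := by rw [hzeq]; simp [Finset.mem_symmDiff, hjx]
        have hiA : i ∈ symmDiff z y := Finset.mem_symmDiff.2 (Or.inr ⟨hiy, hiz⟩)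
        have hjA : j ∉ symmDiff z y := by simp [Finset.mem_symmDiff, hjz, hjy]
        obtain ⟨t, hti, hAeq⟩ := aux_extract _ hczy hiA
        have htA : t ∈ symmDiff z y := by rw [hAeq]; simp
        have htj : t ≠ j := fun h => hjA (h ▸ htA)
        have hxA : symmDiff x y = symmDiff (symmDiff z y) {i, j} := by
          rw [hzeq, aux_sd_swap x y, symmDiff_symmDiff_cancel_right]
        refine memB y x hyv hxS ?_
        rw [hxA, hAeq, aux_pair_sd i j t hij hti htj]
        exact Finset.card_pair (Ne.symm htj)
  · -- i ∈ y, j ∉ y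
    have key : y ∈ B ∧ symmDiff y {i, j} ∈ B := by
      rcases Finset.mem_union.1 hy with hyT | hybd
      · rcases aux_mem_shift_cases hij hyT with ⟨hyS, himp⟩ | ⟨x, hxS, hix, hjx, hyeq, _⟩
        · exact ⟨hSB hyS, hSB (himp hiy hjy)⟩
        · exfalso
          have : j ∈ symmDiff x {i, j} := by simp [Finset.mem_symmDiff, hjx]
          rw [← hyeq] at this
          exact hjy this
      · obtain ⟨hyv, hyn, z, hzT, hczy⟩ := Finset.mem_filter.1 hybd
        have hyDv : symmDiff y {i, j} ∈ johnsonVerts n m :=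
          aux_sd_mem_verts n m i j hm hi hj hij hyv (Or.inl ⟨hiy, hjy⟩)
        rcases aux_mem_shift_cases hij hzT with ⟨hzS, himp⟩ | ⟨x, hxS, hix, hjx, hzeq, _⟩
        · refine ⟨memB y z hyv hzS hczy, ?_⟩
          by_cases hiz : i ∈ z <;> by_cases hjz : j ∈ z
          · have hjA : j ∈ symmDiff z y := Finset.mem_symmDiff.2 (Or.inl ⟨hjz, hjy⟩)
            have hiA : i ∉ symmDiff z y := by simp [Finset.mem_symmDiff, hiz, hiy]
            obtain ⟨t, htj, hAeq⟩ := aux_extract _ hczy hjA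
            have htA : t ∈ symmDiff z y := by rw [hAeq]; simp
            have hti : t ≠ i := fun h => hiA (h ▸ htA)
            refine memB _ z hyDv hzS ?_
            rw [← symmDiff_assoc, hAeq, aux_pair_sd' i j t hij hti htj]
            exact Finset.card_pair (Ne.symm hti)
          · refine memB _ (symmDiff z {i, j}) hyDv (himp hiz hjz) ?_
            rw [aux_sd3]; exact hczy
          · have hiA : i ∈ symmDiff z y := Finset.mem_symmDiff.2 (Or.inr ⟨hiy, hiz⟩)
            have hjA : j ∈ symmDiff z y := Finset.mem_symmDiff.2 (Or.inl ⟨hjz, hjy⟩)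
            have hAD : symmDiff z y = {i, j} := aux_eq_pair _ hczy hiA hjA hij
            have hyd : symmDiff y {i, j} = z := by
              rw [← hAD, symmDiff_comm z y, symmDiff_symmDiff_cancel_left]
            rw [hyd]; exact hSB hzS
          · have hiA : i ∈ symmDiff z y := Finset.mem_symmDiff.2 (Or.inr ⟨hiy, hiz⟩)
            have hjA : j ∉ symmDiff z y := by simp [Finset.mem_symmDiff, hjz, hjy]
            obtain ⟨t, hti, hAeq⟩ := aux_extract _ hczy hiA
            have htA : t ∈ symmDiff z y := by rw [hAeq]; simp
            have htj : t ≠ j := fun h => hjA (h ▸ htA)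
            refine memB _ z hyDv hzS ?_
            rw [← symmDiff_assoc, hAeq, aux_pair_sd i j t hij hti htj]
            exact Finset.card_pair (Ne.symm htj)
        · -- z = x △ {i,j}
          have hiz : i ∉ z := by rw [hzeq]; simp [Finset.mem_symmDiff, hix]
          have hjz : j ∈ z := by rw [hzeq]; simp [Finset.mem_symmDiff, hjx]
          have hiA : i ∈ symmDiff z y := Finset.mem_symmDiff.2 (Or.inr ⟨hiy, hiz⟩)
          have hjA : j ∈ symmDiff z y := Finset.mem_symmDiff.2 (Or.inl ⟨hjz, hjy⟩)
          have hAD : symmDiff z y = {i, j} := aux_eq_pair _ hczy hiA hjA hij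
          have hyx : y = x := by
            have h1 : y = symmDiff z {i, j} := by
              rw [← hAD, symmDiff_symmDiff_cancel_left]
            rw [h1, hzeq, symmDiff_symmDiff_cancel_right]
          refine ⟨by rw [hyx]; exact hSB hxS, ?_⟩
          refine memB _ x hyDv hxS ?_
          rw [hyx, symmDiff_symmDiff_cancel_left]
          exact Finset.card_pair hij
    refine himg y key.1 ?_
    unfold shiftFun
    exact if_neg (fun hc =>
      hc.2.2 (by rw [aux_insert_erase i j y hij hiy hjy]; exact key.2))
  · -- i ∉ y, j ∈ y
    by_cases hyB : y ∈ B
    · exact himg y hyB (if_neg (fun hc => hiy hc.1))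
    · have hyD : symmDiff y {i, j} ∈ B := by
        rcases Finset.mem_union.1 hy with hyT | hybd
        · rcases aux_mem_shift_cases hij hyT with ⟨hyS, _⟩ | ⟨x, hxS, hix, hjx, hyeq, _⟩
          · exact absurd (hSB hyS) hyB
          · rw [hyeq, symmDiff_symmDiff_cancel_right]; exact hSB hxS
        · obtain ⟨hyv, hyn, z, hzT, hczy⟩ := Finset.mem_filter.1 hybd
          rcases aux_mem_shift_cases hij hzT with ⟨hzS, _⟩ | ⟨x, hxS, hix, hjx, hzeq, _⟩
          · exact absurd (memB y z hyv hzS hczy) hyB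
          · have hyDv : symmDiff y {i, j} ∈ johnsonVerts n m :=
              aux_sd_mem_verts n m i j hm hi hj hij hyv (Or.inr ⟨hjy, hiy⟩)
            refine memB _ x hyDv hxS ?_
            have hkey : symmDiff x (symmDiff y {i, j}) = symmDiff z y := by
              rw [hzeq, symmDiff_assoc, symmDiff_comm ({i, j} : Finset ℕ) y]
            rw [hkey]; exact hczy
      have hiD : i ∈ symmDiff y {i, j} := by simp [Finset.mem_symmDiff, hiy]
      have hjD : j ∉ symmDiff y {i, j} := by simp [Finset.mem_symmDiff, hjy]
      have hins : insert j ((symmDiff y {i, j}).erase i) = y := by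
        rw [aux_insert_erase i j _ hij hiD hjD, symmDiff_symmDiff_cancel_right]
      refine himg (symmDiff y {i, j}) hyD ?_
      unfold shiftFun
      rw [if_pos ⟨hiD, hjD, by rw [hins]; exact hyB⟩, hins]
  · -- i ∉ y, j ∉ y : neutral
    refine himg y ?_ (if_neg (fun hc => hiy hc.1))
    rcases Finset.mem_union.1 hy with hyT | hybd
    · rcases aux_mem_shift_cases hij hyT with ⟨hyS, _⟩ | ⟨x, hxS, hix, hjx, hyeq, _⟩
      · exact hSB hyS
      · exfalso
        have : j ∈ symmDiff x {i, j} := by simp [Finset.mem_symmDiff, hjx]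
        rw [← hyeq] at this
        exact hjy this
    · obtain ⟨hyv, hyn, z, hzT, hczy⟩ := Finset.mem_filter.1 hybd
      rcases aux_mem_shift_cases hij hzT with ⟨hzS, _⟩ | ⟨x, hxS, hix, hjx, hzeq, _⟩
      · exact memB y z hyv hzS hczy
      · have hiz : i ∉ z := by rw [hzeq]; simp [Finset.mem_symmDiff, hix]
        have hjz : j ∈ z := by rw [hzeq]; simp [Finset.mem_symmDiff, hjx]
        have hjA : j ∈ symmDiff z y := Finset.mem_symmDiff.2 (Or.inl ⟨hjz, hjy⟩)
        have hiA : i ∉ symmDiff z y := by simp [Finset.mem_symmDiff, hiz, hiy]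
        obtain ⟨t, htj, hAeq⟩ := aux_extract _ hczy hjA
        have htA : t ∈ symmDiff z y := by rw [hAeq]; simp
        have hti : t ≠ i := fun h => hiA (h ▸ htA)
        have hxA : symmDiff x y = symmDiff (symmDiff z y) {i, j} := by
          rw [hzeq, aux_sd_swap x y, symmDiff_symmDiff_cancel_right]
        refine memB y x hyv hxS ?_
        rw [hxA, hAeq, aux_pair_sd' i j t hij hti htj]
        exact Finset.card_pair (Ne.symm hti)


/-- For `i ≠ j` in `[n]` and a family `S` of `m`-subsets of `[n]`,
the shift `T_{ij}` preserves cardinality and does not increase the cardinality of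
the ball nor of the boundary in `J(n,m)`. -/
theorem card_shift_and_card_ball_boundary_shift_le
    (n m i j : ℕ) (hm : 1 ≤ m) (hmn : m ≤ n)
    (hi : i < n) (hj : j < n) (hij : i ≠ j)
    (S : Finset (Finset ℕ)) (hS : S ⊆ johnsonVerts n m) :
    (shift i j S).card = S.card ∧
      (ball n m (shift i j S)).card ≤ (ball n m S).card ∧
      (boundary n m (shift i j S)).card ≤ (boundary n m S).card := by
  have hcard := aux_shift_card i j S
  have hball : (ball n m (shift i j S)).card ≤ (ball n m S).card := by
    refine le_trans
      (Finset.card_le_card (aux_ball_shift_subset n m i j hm hi hj hij S hS)) ?_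
    unfold shift
    exact Finset.card_image_le
  have d1 : Disjoint (shift i j S) (boundary n m (shift i j S)) := by
    rw [Finset.disjoint_left]
    intro a ha hb
    unfold boundary at hb
    exact (Finset.mem_filter.1 hb).2.1 ha
  have d2 : Disjoint S (boundary n m S) := by
    rw [Finset.disjoint_left]
    intro a ha hb
    unfold boundary at hb
    exact (Finset.mem_filter.1 hb).2.1 ha
  have e1 : (ball n m (shift i j S)).card
      = (shift i j S).card + (boundary n m (shift i j S)).card := by
    unfold ball
    exact Finset.card_union_of_disjoint d1
  have e2 : (ball n m S).card = S.card + (boundary n m S).card := by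
    unfold ball
    exact Finset.card_union_of_disjoint d2
  exact ⟨hcard, hball, by omega⟩
end

section
/- Let n ≥ 2 and let S be a nonempty set of vertices of the Johnson graph J(n,2), i.e. a family of 2-element subsets of [n]. Let t be the cardinality of the support of S (the union of the members of S). Then |∂S| = C(n,2) − |S| − C(n−t, 2), where C(a,2) = 0 when a < 2. -/
open Finset

lemma card_symmDiff_aux (x y : Finset ℕ) :
    (symmDiff x y).card + 2 * (x ∩ y).card = x.card + y.card := by
  rw [symmDiff_def, Finset.sup_eq_union, Finset.card_union_of_disjoint disjoint_sdiff_sdiff]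
  have h1 := Finset.card_sdiff_add_card_inter x y
  have h2 := Finset.card_sdiff_add_card_inter y x
  rw [Finset.inter_comm] at h2
  omega


theorem card_boundary_johnson_two'
    (n : ℕ) (hn : 2 ≤ n)
    (S : Finset (Finset ℕ)) (hS : S ⊆ johnsonVerts n 2) (hne : S.Nonempty)
    (t : ℕ) (ht : (S.sup id).card = t) :
    ((boundary n 2 S).card : ℤ) =
      (n.choose 2 : ℤ) - (S.card : ℤ) - ((n - t).choose 2 : ℤ) := by
  set T : Finset ℕ := S.sup id with hT
  have hmem : ∀ x ∈ S, x ⊆ Finset.range n ∧ x.card = 2 := by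
    intro x hx
    have := hS hx
    simpa [johnsonVerts, Finset.mem_powersetCard] using this
  have hxT : ∀ x ∈ S, x ⊆ T := fun x hx => Finset.le_sup (f := id) hx
  have hTsub : T ⊆ Finset.range n := Finset.sup_le fun x hx => (hmem x hx).1
  set D : Finset (Finset ℕ) := (Finset.range n \ T).powersetCard 2 with hD
  have hbd : boundary n 2 S = johnsonVerts n 2 \ (S ∪ D) := by
    ext y
    simp only [boundary, Finset.mem_filter, Finset.mem_sdiff, Finset.mem_union, hD,
      Finset.mem_powersetCard]
    constructor
    · rintro ⟨hy, hyS, x, hxS, hcard⟩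
      have hycard : y.card = 2 := by
        have := hy; simp [johnsonVerts, Finset.mem_powersetCard] at this; exact this.2
      refine ⟨hy, ?_⟩
      push_neg
      refine ⟨hyS, fun hsub => ?_⟩
      exfalso
      have h := card_symmDiff_aux x y
      rw [hcard, (hmem x hxS).2, hycard] at h
      have h1 : (x ∩ y).card = 1 := by omega
      obtain ⟨a, ha⟩ := Finset.card_pos.mp (by omega : 0 < (x ∩ y).card)
      have haT : a ∈ T := hxT x hxS (Finset.mem_inter.mp ha).1
      have : a ∈ Finset.range n \ T := hsub (Finset.mem_inter.mp ha).2
      exact (Finset.mem_sdiff.mp this).2 haT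
    · rintro ⟨hy, hnot⟩
      have hycard : y.card = 2 := by
        have := hy; simp [johnsonVerts, Finset.mem_powersetCard] at this; exact this.2
      have hysub : y ⊆ Finset.range n := by
        have := hy; simp [johnsonVerts, Finset.mem_powersetCard] at this; exact this.1
      push_neg at hnot
      obtain ⟨hyS, hns⟩ := hnot
      have hns' : ¬ y ⊆ Finset.range n \ T := fun h => hns h hycard
      -- ∃ a ∈ y, a ∈ T
      have : ∃ a ∈ y, a ∈ T := by
        by_contra hc
        push_neg at hc
        exact hns' fun a ha => Finset.mem_sdiff.mpr ⟨hysub ha, hc a ha⟩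
      obtain ⟨a, hay, haT⟩ := this
      obtain ⟨x, hxS, hax⟩ := Finset.mem_sup.mp haT
      refine ⟨hy, hyS, x, hxS, ?_⟩
      have hxcard := (hmem x hxS).2
      have hle : (x ∩ y).card ≤ 2 := by
        calc (x ∩ y).card ≤ x.card := Finset.card_le_card (Finset.inter_subset_left)
        _ = 2 := hxcard
      have hpos : 0 < (x ∩ y).card :=
        Finset.card_pos.mpr ⟨a, Finset.mem_inter.mpr ⟨hax, hay⟩⟩
      have hne2 : (x ∩ y).card ≠ 2 := by
        intro h2
        have hxy : x ∩ y = x := Finset.eq_of_subset_of_card_le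
          (Finset.inter_subset_left) (by omega)
        have hyy : x ∩ y = y := Finset.eq_of_subset_of_card_le
          (Finset.inter_subset_right) (by omega)
        have hxeq : x = y := by rw [← hxy, hyy]
        exact hyS (hxeq ▸ hxS)
      have h1 : (x ∩ y).card = 1 := by omega
      have h := card_symmDiff_aux x y
      rw [h1, hxcard, hycard] at h
      omega
  have hDsub : D ⊆ johnsonVerts n 2 :=
    Finset.powersetCard_mono (Finset.sdiff_subset)
  have hdisj : Disjoint S D := by
    rw [Finset.disjoint_left]
    intro x hx hxD
    rw [hD, Finset.mem_powersetCard] at hxD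
    obtain ⟨b, hb⟩ := Finset.card_pos.mp (by rw [(hmem x hx).2]; omega)
    have hbT : b ∈ T := hxT x hx hb
    exact (Finset.mem_sdiff.mp (hxD.1 hb)).2 hbT
  have hUsub : S ∪ D ⊆ johnsonVerts n 2 := Finset.union_subset hS hDsub
  have hcardJ : (johnsonVerts n 2).card = n.choose 2 := by
    simp [johnsonVerts, Finset.card_powersetCard]
  have hcardD : D.card = (n - t).choose 2 := by
    rw [hD, Finset.card_powersetCard, Finset.card_sdiff_of_subset hTsub, Finset.card_range, ht]
  have hcardU : (S ∪ D).card = S.card + (n - t).choose 2 := by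
    rw [Finset.card_union_of_disjoint hdisj, hcardD]
  have hle : S.card + (n - t).choose 2 ≤ n.choose 2 := by
    rw [← hcardU, ← hcardJ]; exact Finset.card_le_card hUsub
  rw [hbd, Finset.card_sdiff_of_subset hUsub, hcardJ, hcardU]
  push_cast [Nat.cast_sub hle]
  ring

/-- For a nonempty family `S` of `2`-subsets of `[n]`, `n ≥ 2`,
with support of cardinality `t`, the boundary of `S` in `J(n,2)` has cardinality
`C(n,2) - |S| - C(n-t,2)`. -/
theorem card_boundary_johnson_two
    (n : ℕ) (hn : 2 ≤ n)
    (S : Finset (Finset ℕ)) (hS : S ⊆ johnsonVerts n 2) (hne : S.Nonempty)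
    (t : ℕ) (ht : (S.sup id).card = t) :
    ((boundary n 2 S).card : ℤ) =
      (n.choose 2 : ℤ) - (S.card : ℤ) - ((n - t).choose 2 : ℤ) := by
  exact card_boundary_johnson_two' n hn S hS hne t ht
end

section
/- For each n ≥ 3 and each 1 ≤ k ≤ C(n,2), the isoperimetric function of the Johnson graph J(n,2) satisfies μ_{n,2}(k) = f(k,n,2); in particular, the initial segment of length k in the colex order on 2-element subsets of [n] is an optimal set of J(n,2). -/
open Finset

section JohnsonAux

lemma two_mul_choose_two (a : ℕ) : 2 * a.choose 2 + a = a * a := by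
  induction a with
  | zero => rfl
  | succ a ih =>
    rw [Nat.choose_succ_succ, Nat.choose_one_right]
    nlinarith [ih]

lemma choose_two_strict {a b : ℕ} (ha : 1 ≤ a) (h : a < b) : a.choose 2 < b.choose 2 := by
  have h1 : (a + 1).choose 2 = a + a.choose 2 := by
    rw [Nat.choose_succ_succ, Nat.choose_one_right]
  have h2 : (a + 1).choose 2 ≤ b.choose 2 := Nat.choose_le_choose 2 h
  omega

lemma card_eq_two_lt {s : Finset ℕ} (h : s.card = 2) : ∃ a b, a < b ∧ s = {a, b} := by
  obtain ⟨a, b, hab, rfl⟩ := Finset.card_eq_two.1 h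
  rcases hab.lt_or_gt with h' | h'
  · exact ⟨a, b, h', rfl⟩
  · exact ⟨b, a, h', by rw [pair_comm]⟩

lemma pair_mem_JV {n a b : ℕ} (hab : a < b) :
    ({a, b} : Finset ℕ) ∈ johnsonVerts n 2 ↔ b < n := by
  simp only [johnsonVerts, mem_powersetCard, insert_subset_iff, singleton_subset_iff, mem_range,
    card_pair hab.ne, and_true]
  omega

lemma pair_colex_lt {a b c d : ℕ} (hab : a < b) (hcd : c < d) :
    toColex ({c,d} : Finset ℕ) < toColex {a,b} ↔
      d < b ∨ (d = b ∧ c < a) := by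
  rw [Finset.Colex.toColex_lt_toColex_iff_exists_forall_lt]
  simp only [mem_insert, mem_singleton, exists_eq_or_imp, exists_eq_left, forall_eq_or_imp,
    forall_eq, not_or]
  omega

lemma pair_right_inj {b c c' : ℕ} (hc : c ≠ b) (h : ({c, b} : Finset ℕ) = {c', b}) : c = c' := by
  have : c ∈ ({c', b} : Finset ℕ) := h ▸ mem_insert_self c {b}
  simp only [mem_insert, mem_singleton] at this
  tauto

lemma symmDiff_card_two {x e : Finset ℕ} (hx : x.card = 2) (he : e.card = 2) :
    (symmDiff x e).card = 2 ↔ (x ∩ e).card = 1 := by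
  have h1 : (x \ e).card + (x ∩ e).card = x.card := card_sdiff_add_card_inter x e
  have h2 : (e \ x).card + (e ∩ x).card = e.card := card_sdiff_add_card_inter e x
  have h3 : (symmDiff x e).card = (x \ e).card + (e \ x).card := by
    rw [symmDiff_def]
    exact card_union_of_disjoint disjoint_sdiff_sdiff
  rw [inter_comm e x] at h2
  omega

lemma boundary_eq {n : ℕ} {S : Finset (Finset ℕ)} (hS : S ⊆ johnsonVerts n 2) :
    boundary n 2 S = ((johnsonVerts n 2).filter fun e => ¬ Disjoint e (S.sup id)) \ S := by
  ext e
  simp only [boundary, mem_filter, mem_sdiff]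
  constructor
  · rintro ⟨heJV, heS, x, hxS, hsd⟩
    have hx2 : x.card = 2 := ((mem_powersetCard.1 (hS hxS)).2)
    have he2 : e.card = 2 := ((mem_powersetCard.1 heJV).2)
    have h1 : (x ∩ e).card = 1 := (symmDiff_card_two hx2 he2).1 hsd
    obtain ⟨a, ha⟩ := card_eq_one.1 h1
    have haxe : a ∈ x ∩ e := ha ▸ mem_singleton_self a
    refine ⟨⟨heJV, ?_⟩, heS⟩
    intro hdisj
    exact (Finset.disjoint_left.1 hdisj) (mem_inter.1 haxe).2
      (Finset.mem_sup.2 ⟨x, hxS, (mem_inter.1 haxe).1⟩)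
  · rintro ⟨⟨heJV, hdisj⟩, heS⟩
    refine ⟨heJV, heS, ?_⟩
    obtain ⟨a, hae, haV⟩ := Finset.not_disjoint_iff.1 hdisj
    obtain ⟨x, hxS, hax⟩ := Finset.mem_sup.1 haV
    have hx2 : x.card = 2 := ((mem_powersetCard.1 (hS hxS)).2)
    have he2 : e.card = 2 := ((mem_powersetCard.1 heJV).2)
    refine ⟨x, hxS, (symmDiff_card_two hx2 he2).2 ?_⟩
    have hge : 1 ≤ (x ∩ e).card := card_pos.2 ⟨a, mem_inter.2 ⟨hax, hae⟩⟩
    have hle : (x ∩ e).card ≤ 2 := hx2 ▸ card_le_card inter_subset_left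
    have hne : (x ∩ e).card ≠ 2 := by
      intro h2
      have hxe : x ∩ e = x := eq_of_subset_of_card_le inter_subset_left (by omega)
      have hxe' : x ⊆ e := hxe ▸ inter_subset_right
      have : x = e := eq_of_subset_of_card_le hxe' (by omega)
      exact heS (this ▸ hxS)
    omega

lemma filter_disjoint_eq {n : ℕ} {V : Finset ℕ} :
    (johnsonVerts n 2).filter (fun e => Disjoint e V) = (range n \ V).powersetCard 2 := by
  ext e
  simp only [johnsonVerts, mem_filter, mem_powersetCard, subset_sdiff]
  tauto

lemma boundary_card {n : ℕ} {S : Finset (Finset ℕ)} (hS : S ⊆ johnsonVerts n 2)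
    (hne : S.Nonempty) :
    (boundary n 2 S).card + S.card + (n - (S.sup id).card).choose 2 = n.choose 2 := by
  set V := S.sup id with hVdef
  have hVn : V ⊆ range n := by
    intro a ha
    obtain ⟨x, hxS, hax⟩ := Finset.mem_sup.1 ha
    exact (mem_powersetCard.1 (hS hxS)).1 hax
  have hSA : S ⊆ (johnsonVerts n 2).filter fun e => ¬ Disjoint e V := by
    intro e heS
    have he2 : e.card = 2 := (mem_powersetCard.1 (hS heS)).2
    obtain ⟨a, hae⟩ := card_pos.1 (by omega : 0 < e.card)
    exact mem_filter.2 ⟨hS heS, fun hd => (Finset.disjoint_left.1 hd) hae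
      (Finset.mem_sup.2 ⟨e, heS, hae⟩)⟩
  have hbd : (boundary n 2 S).card =
      ((johnsonVerts n 2).filter fun e => ¬ Disjoint e V).card - S.card := by
    rw [boundary_eq hS, card_sdiff_of_subset hSA]
  have hsplit : ((johnsonVerts n 2).filter fun e => Disjoint e V).card +
      ((johnsonVerts n 2).filter fun e => ¬ Disjoint e V).card = (johnsonVerts n 2).card :=
    card_filter_add_card_filter_not _
  have hdcard : ((johnsonVerts n 2).filter fun e => Disjoint e V).card
      = (n - V.card).choose 2 := by
    rw [filter_disjoint_eq, card_powersetCard, card_sdiff_of_subset hVn, card_range]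
  have hJV : (johnsonVerts n 2).card = n.choose 2 := by
    rw [johnsonVerts, card_powersetCard, card_range]
  have hle : S.card ≤ ((johnsonVerts n 2).filter fun e => ¬ Disjoint e V).card :=
    card_le_card hSA
  omega

lemma card_le_choose_sup {n : ℕ} {S : Finset (Finset ℕ)} (hS : S ⊆ johnsonVerts n 2) :
    S.card ≤ ((S.sup id).card).choose 2 := by
  have hsub : S ⊆ (S.sup id).powersetCard 2 := by
    intro x hxS
    exact mem_powersetCard.2 ⟨Finset.le_sup (f := id) hxS, (mem_powersetCard.1 (hS hxS)).2⟩
  calc S.card ≤ ((S.sup id).powersetCard 2).card := card_le_card hsub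
    _ = _ := by rw [card_powersetCard]

lemma rank_eq {n a b : ℕ} (hab : a < b) (hbn : b < n) :
    ((johnsonVerts n 2).filter fun t => toColex t < toColex {a, b}).card
      = b.choose 2 + a := by
  have hset : ((johnsonVerts n 2).filter fun t =>
        toColex t < toColex {a, b})
      = (range b).powersetCard 2 ∪ (range a).image (fun c => ({c, b} : Finset ℕ)) := by
    ext t
    constructor
    · intro ht
      obtain ⟨htJV, hlt⟩ := mem_filter.1 ht
      obtain ⟨c, d, hcd, rfl⟩ := card_eq_two_lt (mem_powersetCard.1 htJV).2
      rw [pair_colex_lt hab hcd] at hlt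
      rcases hlt with h | ⟨rfl, hca⟩
      · refine mem_union_left _ (mem_powersetCard.2 ⟨?_, card_pair hcd.ne⟩)
        rw [insert_subset_iff, singleton_subset_iff]
        exact ⟨mem_range.2 (hcd.trans h), mem_range.2 h⟩
      · exact mem_union_right _ (mem_image.2 ⟨c, mem_range.2 hca, rfl⟩)
    · intro ht
      rcases mem_union.1 ht with h | h
      · obtain ⟨hsub, hcard⟩ := mem_powersetCard.1 h
        obtain ⟨c, d, hcd, rfl⟩ := card_eq_two_lt hcard
        have hd : d < b := mem_range.1 (hsub (by simp))
        exact mem_filter.2 ⟨(pair_mem_JV hcd).2 (hd.trans hbn),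
          (pair_colex_lt hab hcd).2 (Or.inl hd)⟩
      · obtain ⟨c, hc, rfl⟩ := mem_image.1 h
        have hca := mem_range.1 hc
        have hcb : c < b := hca.trans hab
        exact mem_filter.2 ⟨(pair_mem_JV hcb).2 hbn,
          (pair_colex_lt hab hcb).2 (Or.inr ⟨rfl, hca⟩)⟩
  rw [hset, card_union_of_disjoint ?hd, card_powersetCard, card_range,
    card_image_of_injOn ?hi, card_range]
  case hd =>
    rw [Finset.disjoint_left]
    rintro t htp htim
    obtain ⟨c, hc, rfl⟩ := mem_image.1 htim
    have hsub := (mem_powersetCard.1 htp).1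
    have : b ∈ range b := hsub (by simp)
    simp at this
  case hi =>
    intro c hc c' hc' h
    exact pair_right_inj (Nat.ne_of_lt ((mem_range.1 hc).trans hab)) h

/-- The extremal configuration: all pairs inside `range k0` plus the pairs `{c, k0}`
for `c < k1`. -/
def Eset (k0 k1 : ℕ) : Finset (Finset ℕ) :=
  (range k0).powersetCard 2 ∪ (range k1).image (fun c => ({c, k0} : Finset ℕ))

lemma mem_Eset {k0 k1 a b : ℕ} (hab : a < b) (hk1 : k1 ≤ k0) :
    ({a, b} : Finset ℕ) ∈ Eset k0 k1 ↔ (b < k0 ∨ (b = k0 ∧ a < k1)) := by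
  simp only [Eset, mem_union, mem_powersetCard, mem_image, mem_range, insert_subset_iff,
    singleton_subset_iff, mem_range, card_pair hab.ne, and_true]
  constructor
  · rintro (⟨ha, hb⟩ | ⟨c, hc, hpair⟩)
    · exact Or.inl hb
    · have hb : b ∈ ({c, k0} : Finset ℕ) := hpair ▸ (by simp)
      have ha : a ∈ ({c, k0} : Finset ℕ) := hpair ▸ (by simp)
      simp only [mem_insert, mem_singleton] at hb ha
      rcases hb with rfl | rfl
      · rcases ha with rfl | rfl
        · omega
        · omega
      · rcases ha with rfl | rfl
        · exact Or.inr ⟨rfl, hc⟩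
        · omega
  · rintro (hb | ⟨rfl, ha⟩)
    · exact Or.inl ⟨by omega, hb⟩
    · exact Or.inr ⟨a, ha, rfl⟩

lemma Eset_card {k0 k1 : ℕ} (hk1 : k1 ≤ k0) : (Eset k0 k1).card = k0.choose 2 + k1 := by
  rw [Eset, card_union_of_disjoint ?hd, card_powersetCard, card_range,
    card_image_of_injOn ?hi, card_range]
  case hd =>
    rw [Finset.disjoint_left]
    rintro t htp htim
    obtain ⟨c, hc, rfl⟩ := mem_image.1 htim
    have hsub := (mem_powersetCard.1 htp).1
    have : k0 ∈ range k0 := hsub (by simp)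
    simp at this
  case hi =>
    intro c hc c' hc' h
    exact pair_right_inj (Nat.ne_of_lt (lt_of_lt_of_le (mem_range.1 hc) hk1)) h

lemma Eset_subset_JV {n k0 k1 : ℕ} (hk1 : k1 ≤ k0) (hk0n : k0 ≤ n)
    (hk1n : k1 ≠ 0 → k0 < n) :
    Eset k0 k1 ⊆ johnsonVerts n 2 := by
  intro t ht
  rcases mem_union.1 ht with h | h
  · obtain ⟨hsub, hcard⟩ := mem_powersetCard.1 h
    exact mem_powersetCard.2 ⟨hsub.trans (range_subset_range.2 hk0n), hcard⟩
  · obtain ⟨c, hc, rfl⟩ := mem_image.1 h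
    have hck : c < k0 := lt_of_lt_of_le (mem_range.1 hc) hk1
    exact (pair_mem_JV hck).2 (hk1n (by have := mem_range.1 hc; omega))

lemma Eset_mem_subset_range {k0 k1 t : ℕ} {s : Finset ℕ} (hk10 : k1 ≤ k0) (hs : s ∈ Eset k0 k1)
    (ht : (if k1 = 0 then k0 else k0 + 1) ≤ t) : s ⊆ range t := by
  rcases mem_union.1 hs with h | h
  · exact ((mem_powersetCard.1 h).1).trans (range_subset_range.2 (by split at ht <;> omega))
  · obtain ⟨c, hc, rfl⟩ := mem_image.1 h
    have hc' := mem_range.1 hc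
    have hk1 : k1 ≠ 0 := by omega
    rw [if_neg hk1] at ht
    rw [insert_subset_iff, singleton_subset_iff]
    constructor <;> simp only [mem_range] <;> omega

lemma rank_lt_iff {a b k0 k1 : ℕ} (hab : a < b) (hk0 : 2 ≤ k0) (hk1 : k1 < k0) :
    b.choose 2 + a < k0.choose 2 + k1 ↔ (b < k0 ∨ (b = k0 ∧ a < k1)) := by
  rcases lt_trichotomy b k0 with h | rfl | h
  · have h1 : (b + 1).choose 2 = b + b.choose 2 := by
      rw [Nat.choose_succ_succ, Nat.choose_one_right]
    have h2 : (b + 1).choose 2 ≤ k0.choose 2 := Nat.choose_le_choose 2 h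
    simp only [h, true_or, iff_true]
    omega
  · simp only [lt_irrefl, false_or, true_and]
    omega
  · have h1 : (k0 + 1).choose 2 = k0 + k0.choose 2 := by
      rw [Nat.choose_succ_succ, Nat.choose_one_right]
    have h2 : (k0 + 1).choose 2 ≤ b.choose 2 := Nat.choose_le_choose 2 h
    have hno : ¬ (b < k0 ∨ (b = k0 ∧ a < k1)) := by omega
    simp only [hno, iff_false]
    omega

lemma seg_eq {n k0 k1 : ℕ} (hk0 : 2 ≤ k0) (hk1 : k1 < k0) (hk0n : k0 ≤ n)
    (hk1n : k1 ≠ 0 → k0 < n) :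
    colexInitSeg n 2 (k0.choose 2 + k1) = Eset k0 k1 := by
  ext s
  constructor
  · intro hs
    obtain ⟨hsJV, hrank⟩ := mem_filter.1 hs
    obtain ⟨a, b, hab, rfl⟩ := card_eq_two_lt (mem_powersetCard.1 hsJV).2
    have hbn : b < n := (pair_mem_JV hab).1 hsJV
    rw [rank_eq hab hbn] at hrank
    exact (mem_Eset hab (le_of_lt hk1)).2 ((rank_lt_iff hab hk0 hk1).1 hrank)
  · intro hs
    have hsJV : s ∈ johnsonVerts n 2 := Eset_subset_JV (le_of_lt hk1) hk0n hk1n hs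
    obtain ⟨a, b, hab, rfl⟩ := card_eq_two_lt (mem_powersetCard.1 hsJV).2
    have hbn : b < n := (pair_mem_JV hab).1 hsJV
    refine mem_filter.2 ⟨hsJV, ?_⟩
    rw [rank_eq hab hbn]
    exact (rank_lt_iff hab hk0 hk1).2 ((mem_Eset hab (le_of_lt hk1)).1 hs)

lemma master {n k0 k1 : ℕ} (hk0 : 2 ≤ k0) (hk1 : k1 < k0)
    (hkn : k0.choose 2 + k1 ≤ n.choose 2) (hn : 3 ≤ n) :
    (if k1 = 0 then k0 else k0 + 1) ≤ n ∧
    colexInitSeg n 2 (k0.choose 2 + k1) = Eset k0 k1 ∧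
    (Eset k0 k1).card = k0.choose 2 + k1 ∧
    (boundary n 2 (Eset k0 k1)).card = mu n 2 (k0.choose 2 + k1) ∧
    mu n 2 (k0.choose 2 + k1) + (k0.choose 2 + k1) +
      (n - (if k1 = 0 then k0 else k0 + 1)).choose 2 = n.choose 2 := by
  set v := if k1 = 0 then k0 else k0 + 1 with hv
  set k := k0.choose 2 + k1 with hkdef
  have hk0n : k0 ≤ n := by
    by_contra h
    have := choose_two_strict (by omega : 1 ≤ n) (by omega : n < k0)
    omega
  have hk1n : k1 ≠ 0 → k0 < n := by
    intro h0
    by_contra h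
    have := Nat.choose_le_choose 2 (by omega : n ≤ k0)
    omega
  have hvn : v ≤ n := by
    rw [hv]; split
    · exact hk0n
    · exact hk1n (by assumption)
  have hsucc : (k0 + 1).choose 2 = k0 + k0.choose 2 := by
    rw [Nat.choose_succ_succ, Nat.choose_one_right]
  have hCv1 : (v - 1).choose 2 < k := by
    rw [hv]; split
    · next h =>
      have h1 : (k0 - 1 + 1).choose 2 = (k0 - 1) + (k0 - 1).choose 2 := by
        rw [Nat.choose_succ_succ, Nat.choose_one_right]
      have h2 : k0 - 1 + 1 = k0 := by omega
      rw [h2] at h1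
      omega
    · simp only [Nat.add_sub_cancel]
      omega
  have hCv : k ≤ v.choose 2 := by
    rw [hv]; split
    · omega
    · omega
  have hone : 1 ≤ k := by
    have h22 : Nat.choose 2 2 ≤ k0.choose 2 := Nat.choose_le_choose 2 hk0
    simp [Nat.choose_self] at h22
    omega
  have hseg := seg_eq hk0 hk1 hk0n hk1n
  have hEJV : Eset k0 k1 ⊆ johnsonVerts n 2 := Eset_subset_JV hk1.le hk0n hk1n
  have hEcard : (Eset k0 k1).card = k := Eset_card hk1.le
  have hEne : (Eset k0 k1).Nonempty := card_pos.1 (by omega)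
  have hsupE : (Eset k0 k1).sup id ⊆ range v :=
    Finset.sup_le fun s hs => Eset_mem_subset_range hk1.le hs (le_of_eq hv.symm)
  have hvE : ((Eset k0 k1).sup id).card = v := by
    have hle : ((Eset k0 k1).sup id).card ≤ v := by
      have := card_le_card hsupE
      rwa [card_range] at this
    have h2 : k ≤ (((Eset k0 k1).sup id).card).choose 2 := hEcard ▸ card_le_choose_sup hEJV
    have hge : v ≤ ((Eset k0 k1).sup id).card := by
      by_contra h
      have := Nat.choose_le_choose 2 (by omega : ((Eset k0 k1).sup id).card ≤ v - 1)
      omega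
    omega
  have hbE := boundary_card hEJV hEne
  rw [hEcard, hvE] at hbE
  have hlow : ∀ b ∈ {b | ∃ S : Finset (Finset ℕ),
      S ⊆ johnsonVerts n 2 ∧ S.card = k ∧ (boundary n 2 S).card = b},
      (boundary n 2 (Eset k0 k1)).card ≤ b := by
    rintro b ⟨S, hSJV, hScard, rfl⟩
    have hSne : S.Nonempty := card_pos.1 (by omega)
    have hb := boundary_card hSJV hSne
    have hkle : k ≤ ((S.sup id).card).choose 2 := hScard ▸ card_le_choose_sup hSJV
    have hvS : v ≤ (S.sup id).card := by
      by_contra h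
      have := Nat.choose_le_choose 2 (by omega : (S.sup id).card ≤ v - 1)
      omega
    have hmono : (n - (S.sup id).card).choose 2 ≤ (n - v).choose 2 :=
      Nat.choose_le_choose 2 (by omega)
    omega
  have hmem : (boundary n 2 (Eset k0 k1)).card ∈ {b | ∃ S : Finset (Finset ℕ),
      S ⊆ johnsonVerts n 2 ∧ S.card = k ∧ (boundary n 2 S).card = b} :=
    ⟨Eset k0 k1, hEJV, hEcard, rfl⟩
  have hmu : mu n 2 k = (boundary n 2 (Eset k0 k1)).card := by
    simp only [mu]
    exact le_antisymm (Nat.sInf_le hmem) (le_csInf ⟨_, hmem⟩ hlow)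
  exact ⟨hvn, hseg, hEcard, hmu.symm, by omega⟩

end JohnsonAux

/-- For `n ≥ 3` and `1 ≤ k ≤ C(n,2)`, the isoperimetric function
of `J(n,2)` satisfies `μ_{n,2}(k) = f(k,n,2)` (where `k = ∑_{i=0}^{r} C(ks i, 2-i)`
is the `2`-binomial representation of `k`); in particular the initial segment of
length `k` in the colex order is an optimal set of `J(n,2)`. -/
theorem mu_eq_fVal_johnson_two
    (n k r : ℕ) (ks : ℕ → ℕ)
    (hn : 3 ≤ n) (hk : 1 ≤ k) (hkn : k ≤ n.choose 2)
    (hrep : IsMBinomialRep 2 k r ks) :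
    (mu n 2 k : ℤ) = fVal n 2 r ks ∧
      (boundary n 2 (colexInitSeg n 2 k)).card =
        mu n 2 (colexInitSeg n 2 k).card := by
  obtain ⟨hdec, hge, hr, hsum⟩ := hrep
  interval_cases r
  · -- r = 0 : k = C(ks 0, 2)
    simp only [Nat.sub_zero] at hge
    have hsum0 : k = (ks 0).choose 2 := by simpa using hsum
    have hk' : k = (ks 0).choose 2 + 0 := by omega
    obtain ⟨hvn, hseg, hEcard, hbmu, hadd⟩ :=
      master (n := n) (k0 := ks 0) (k1 := 0) hge (by omega) (by omega) hn
    rw [if_pos rfl] at hvn hadd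
    constructor
    · rw [hk']
      have hd : ks 0 + (n - ks 0) = n := by omega
      set d := n - ks 0 with hddef
      have e1 : (mu n 2 ((ks 0).choose 2 + 0) : ℤ) + ((ks 0).choose 2 : ℤ) + (d.choose 2 : ℤ)
          = (n.choose 2 : ℤ) := by exact_mod_cast hadd
      have t1 : 2 * ((ks 0).choose 2 : ℤ) + (ks 0 : ℤ) = (ks 0 : ℤ) * (ks 0 : ℤ) := by
        exact_mod_cast two_mul_choose_two (ks 0)
      have t2 : 2 * (d.choose 2 : ℤ) + (d : ℤ) = (d : ℤ) * (d : ℤ) := by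
        exact_mod_cast two_mul_choose_two d
      have t3 : 2 * (n.choose 2 : ℤ) + (n : ℤ) = (n : ℤ) * (n : ℤ) := by
        exact_mod_cast two_mul_choose_two n
      have hn' : (n : ℤ) = (ks 0 : ℤ) + (d : ℤ) := by exact_mod_cast hd.symm
      have hsq : (n : ℤ) * (n : ℤ) = (ks 0 : ℤ) * (ks 0 : ℤ) + 2 * ((ks 0 : ℤ) * d)
          + (d : ℤ) * (d : ℤ) := by rw [hn']; ring
      have hfv : fVal n 2 0 ks = ((ks 0 : ℤ)) * ((n : ℤ) - (ks 0 : ℤ)) := by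
        simp [fVal, Finset.Icc_eq_empty_of_lt (by norm_num : (0:ℕ) < 1), Nat.choose_one_right]
      rw [hfv]
      have hprod : (ks 0 : ℤ) * ((n : ℤ) - (ks 0 : ℤ)) = (ks 0 : ℤ) * (d : ℤ) := by
        rw [hn']; ring
      rw [hprod]
      linarith
    · rw [hk', hseg, hEcard]
      exact hbmu
  · -- r = 1 : k = C(ks 0, 2) + ks 1
    simp only [Finset.sum_range_succ, Finset.sum_range_one, Nat.sub_zero, Nat.sub_self,
      Nat.choose_one_right] at hsum hge
    have hk10 : ks 1 < ks 0 := hdec 0 (by norm_num)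
    have hge1 : 1 ≤ ks 1 := hge
    have hk0 : 2 ≤ ks 0 := by omega
    have hk' : k = (ks 0).choose 2 + ks 1 := by
      rw [hsum]; norm_num
    obtain ⟨hvn, hseg, hEcard, hbmu, hadd⟩ :=
      master (n := n) (k0 := ks 0) (k1 := ks 1) hk0 hk10 (by omega) hn
    rw [if_neg (by omega : ¬ ks 1 = 0)] at hvn hadd
    constructor
    · rw [hk']
      have hd : ks 0 + 1 + (n - (ks 0 + 1)) = n := by omega
      set d := n - (ks 0 + 1) with hddef
      have e1 : (mu n 2 ((ks 0).choose 2 + ks 1) : ℤ) + (((ks 0).choose 2 : ℤ) + (ks 1 : ℤ))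
          + (d.choose 2 : ℤ) = (n.choose 2 : ℤ) := by exact_mod_cast hadd
      have t1 : 2 * ((ks 0).choose 2 : ℤ) + (ks 0 : ℤ) = (ks 0 : ℤ) * (ks 0 : ℤ) := by
        exact_mod_cast two_mul_choose_two (ks 0)
      have t2 : 2 * (d.choose 2 : ℤ) + (d : ℤ) = (d : ℤ) * (d : ℤ) := by
        exact_mod_cast two_mul_choose_two d
      have t3 : 2 * (n.choose 2 : ℤ) + (n : ℤ) = (n : ℤ) * (n : ℤ) := by
        exact_mod_cast two_mul_choose_two n
      have hn' : (n : ℤ) = (ks 0 : ℤ) + 1 + (d : ℤ) := by exact_mod_cast hd.symm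
      have hsq : (n : ℤ) * (n : ℤ) = (ks 0 : ℤ) * (ks 0 : ℤ) + (d : ℤ) * (d : ℤ)
          + 2 * ((ks 0 : ℤ) * d) + 2 * (ks 0 : ℤ) + 2 * (d : ℤ) + 1 := by rw [hn']; ring
      have hfv : fVal n 2 1 ks = ((ks 0 : ℤ)) * ((n : ℤ) - (ks 0 : ℤ))
          + (((n : ℤ) - (ks 0 : ℤ) - 1) - (ks 1 : ℤ)) := by
        simp [fVal, Finset.Icc_self, Nat.choose_one_right]
      rw [hfv]
      have hprod : (ks 0 : ℤ) * ((n : ℤ) - (ks 0 : ℤ)) = (ks 0 : ℤ) * (d : ℤ) + (ks 0 : ℤ) := by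
        rw [hn']; ring
      have hlin : (n : ℤ) - (ks 0 : ℤ) - 1 = (d : ℤ) := by omega
      rw [hprod, hlin]
      linarith
    · rw [hk', hseg, hEcard]
      exact hbmu
end

section
/- Let 1 ≤ m < n and let S be a compressed family of m-element subsets of [n], viewed as vertices of the Johnson graph J(n,m). Let S₀ = {x ∈ S : n ∉ x}. Then B(S) = B(S₀), where B denotes the ball in J(n,m), and moreover |B(S)| = |B'(S₀)| + |Δ(S₀)|, where B' denotes the ball in the Johnson graph J(n−1,m) (regarding S₀ as a family of m-subsets of [n−1]) and Δ(S₀) is the lower shadow of S₀. -/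
open Finset

lemma symmDiff_card_two_s8 {x y : Finset ℕ} (hx : x.card = y.card)
    (h : (symmDiff x y).card = 2) :
    ∃ a b, a ∈ x ∧ a ∉ y ∧ b ∈ y ∧ b ∉ x ∧ y = insert b (x.erase a) := by
  rw [symmDiff_def, Finset.sup_eq_union,
    Finset.card_union_of_disjoint (disjoint_sdiff_sdiff)] at h
  have h1 : (x \ y).card + (x ∩ y).card = x.card := Finset.card_sdiff_add_card_inter x y
  have h2 : (y \ x).card + (y ∩ x).card = y.card := Finset.card_sdiff_add_card_inter y x
  rw [Finset.inter_comm] at h2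
  have hxy1 : (x \ y).card = 1 := by omega
  have hxy2 : (y \ x).card = 1 := by omega
  obtain ⟨a, ha⟩ := Finset.card_eq_one.mp hxy1
  obtain ⟨b, hb⟩ := Finset.card_eq_one.mp hxy2
  have hA : ∀ c, c ∈ x ∧ c ∉ y ↔ c = a := by
    intro c; rw [← Finset.mem_sdiff, ha, Finset.mem_singleton]
  have hB : ∀ c, c ∈ y ∧ c ∉ x ↔ c = b := by
    intro c; rw [← Finset.mem_sdiff, hb, Finset.mem_singleton]
  have ha2 := (hA a).mpr rfl
  have hb2 := (hB b).mpr rfl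
  refine ⟨a, b, ha2.1, ha2.2, hb2.1, hb2.2, ?_⟩
  ext c
  simp only [Finset.mem_insert, Finset.mem_erase]
  constructor
  · intro hc
    by_cases hcx : c ∈ x
    · exact Or.inr ⟨fun hca => ha2.2 (hca ▸ hc), hcx⟩
    · exact Or.inl ((hB c).mp ⟨hc, hcx⟩)
  · rintro (rfl | ⟨hca, hcx⟩)
    · exact hb2.1
    · by_contra hcy
      exact hca ((hA c).mp ⟨hcx, hcy⟩)

lemma card_symmDiff_insert_erase {x : Finset ℕ} {a b : ℕ}
    (ha : a ∈ x) (hb : b ∉ x) (hab : a ≠ b) :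
    (symmDiff x (insert b (x.erase a))).card = 2 := by
  have he : symmDiff x (insert b (x.erase a)) = {a, b} := by
    ext c
    simp only [Finset.mem_symmDiff, Finset.mem_insert, Finset.mem_erase, Finset.mem_singleton]
    by_cases h1 : c = a <;> by_cases h2 : c = b <;> subst_vars <;> simp_all
  rw [he, Finset.card_insert_of_notMem (by simp [hab]), Finset.card_singleton]

/-- Let `1 ≤ m < n` and let `S` be a compressed family of
`m`-subsets of `[n]`, with `S₀` the members of `S` not containing the last
element of `[n]`. Then `B(S) = B(S₀)` in `J(n,m)` and
`|B(S)| = |B'(S₀)| + |Δ(S₀)|`, where `B'` is the ball in `J(n-1,m)`. -/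
theorem ball_compressed_section
    (n m : ℕ) (hm : 1 ≤ m) (hmn : m < n)
    (S : Finset (Finset ℕ)) (hS : S ⊆ johnsonVerts n m)
    (hcomp : ∀ i j : ℕ, j < i → i < n → shift i j S = S) :
    ball n m S = ball n m (S.filter fun x => (n - 1) ∉ x) ∧
      (ball n m S).card =
        (ball (n - 1) m (S.filter fun x => (n - 1) ∉ x)).card +
          (lowShadow (n - 1) m (S.filter fun x => (n - 1) ∉ x)).card := by
  obtain ⟨p, rfl⟩ : ∃ p, n = p + 1 := ⟨n - 1, by omega⟩
  simp only [Nat.add_sub_cancel]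
  set S₀ := S.filter fun x => p ∉ x with hS₀def
  have hvert : ∀ x ∈ S, x ⊆ Finset.range (p + 1) ∧ x.card = m := fun x hx =>
    Finset.mem_powersetCard.mp (hS hx)
  have hL : ∀ x ∈ S, ∀ i ∈ x, ∀ j, j ∉ x → j < i → insert j (x.erase i) ∈ S := by
    intro x hx i hi j hj hji
    have hin : i < p + 1 := Finset.mem_range.mp ((hvert x hx).1 hi)
    by_cases hins : insert j (x.erase i) ∈ S
    · exact hins
    · have hsh := hcomp i j hji hin
      have hmem : shiftFun i j S x ∈ shift i j S := Finset.mem_image_of_mem _ hx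
      rw [hsh] at hmem
      rw [shiftFun, if_pos ⟨hi, hj, hins⟩] at hmem
      exact hmem
  have hS₀sub : S₀ ⊆ S := Finset.filter_subset _ _
  have hS₀range : ∀ x ∈ S₀, x ⊆ Finset.range p ∧ x.card = m := by
    intro x hx
    obtain ⟨h1, h2⟩ := Finset.mem_filter.mp hx
    refine ⟨?_, (hvert x h1).2⟩
    intro c hc
    have hcr := Finset.mem_range.mp ((hvert x h1).1 hc)
    have : c ≠ p := fun h => h2 (h ▸ hc)
    exact Finset.mem_range.mpr (by omega)
  -- Part 1
  have hball : ball (p + 1) m S = ball (p + 1) m S₀ := by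
    apply Finset.Subset.antisymm
    · intro z hz
      rw [ball, Finset.mem_union] at hz ⊢
      rcases hz with hzS | hzB
      · by_cases hpz : p ∈ z
        · right
          rw [boundary, Finset.mem_filter]
          refine ⟨hS hzS, fun h => (Finset.mem_filter.mp h).2 hpz, ?_⟩
          have hj : ∃ j, j < p ∧ j ∉ z := by
            by_contra hcon
            push_neg at hcon
            have hsub : Finset.range (p + 1) ⊆ z := by
              intro c hc
              rcases Nat.lt_succ_iff_lt_or_eq.mp (Finset.mem_range.mp hc) with h | rfl
              · exact hcon c h
              · exact hpz
            have := Finset.card_le_card hsub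
            rw [Finset.card_range, (hvert z hzS).2] at this
            omega
          obtain ⟨j, hjp, hjz⟩ := hj
          refine ⟨insert j (z.erase p), ?_, ?_⟩
          · rw [hS₀def, Finset.mem_filter]
            refine ⟨hL z hzS p hpz j hjz hjp, ?_⟩
            simp only [Finset.mem_insert, Finset.mem_erase]
            push_neg
            exact ⟨by omega, fun h => absurd rfl h⟩
          · rw [symmDiff_comm]
            exact card_symmDiff_insert_erase hpz hjz (by omega)
        · left
          exact Finset.mem_filter.mpr ⟨hzS, hpz⟩
      · rw [boundary, Finset.mem_filter] at hzB
        obtain ⟨hzV, hzS, x, hxS, hadj⟩ := hzB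
        have hxc := (hvert x hxS).2
        have hzc := (Finset.mem_powersetCard.mp hzV).2
        obtain ⟨a, b, hax, haz, hbz, hbx, hzeq⟩ :=
          symmDiff_card_two_s8 (hxc.trans hzc.symm) hadj
        by_cases hpx : p ∈ x
        · by_cases hap : a = p
          · exfalso
            have hbp : b < a := by
              have h1 := Finset.mem_range.mp ((Finset.mem_powersetCard.mp hzV).1 hbz)
              have h2 : b ≠ a := fun h => haz (h ▸ hbz)
              omega
            exact hzS (hzeq ▸ hL x hxS a hax b hbx hbp)
          · have hpz2 : p ∈ z := by
              rw [hzeq]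
              exact Finset.mem_insert_of_mem (Finset.mem_erase.mpr ⟨Ne.symm hap, hpx⟩)
            have hbp : b ≠ p := fun h => hbx (h ▸ hpx)
            have hbr : b < p := by
              have h1 := Finset.mem_range.mp ((Finset.mem_powersetCard.mp hzV).1 hbz)
              omega
            have hx'S : insert b (x.erase p) ∈ S := hL x hxS p hpx b hbx hbr
            have hpx' : p ∉ insert b (x.erase p) := by
              simp only [Finset.mem_insert, Finset.mem_erase]
              push_neg
              exact ⟨Ne.symm hbp, fun h => absurd rfl h⟩
            right
            rw [boundary, Finset.mem_filter]
            refine ⟨hzV, fun h => hzS (hS₀sub h), insert b (x.erase p),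
              Finset.mem_filter.mpr ⟨hx'S, hpx'⟩, ?_⟩
            have hab : a ≠ b := fun h => hbx (h ▸ hax)
            have hax' : a ∈ insert b (x.erase p) :=
              Finset.mem_insert_of_mem (Finset.mem_erase.mpr ⟨hap, hax⟩)
            have hzeq2 : z = insert p ((insert b (x.erase p)).erase a) := by
              rw [hzeq]
              ext c
              simp only [Finset.mem_insert, Finset.mem_erase]
              constructor
              · rintro (rfl | ⟨hca, hcx⟩)
                · exact Or.inr ⟨Ne.symm hab, Or.inl rfl⟩
                · by_cases hcp : c = p
                  · exact Or.inl hcp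
                  · exact Or.inr ⟨hca, Or.inr ⟨hcp, hcx⟩⟩
              · rintro (rfl | ⟨hca, (rfl | ⟨hcp, hcx⟩)⟩)
                · exact Or.inr ⟨Ne.symm hap, hpx⟩
                · exact Or.inl rfl
                · exact Or.inr ⟨hca, hcx⟩
            rw [hzeq2]
            exact card_symmDiff_insert_erase hax' hpx' hap
        · right
          rw [boundary, Finset.mem_filter]
          exact ⟨hzV, fun h => hzS (hS₀sub h), x, Finset.mem_filter.mpr ⟨hxS, hpx⟩, hadj⟩
    · intro z hz
      rw [ball, Finset.mem_union] at hz ⊢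
      rcases hz with h | h
      · exact Or.inl (hS₀sub h)
      · rw [boundary, Finset.mem_filter] at h
        obtain ⟨hzV, hz0, x, hx0, hadj⟩ := h
        by_cases hzS' : z ∈ S
        · exact Or.inl hzS'
        · exact Or.inr (Finset.mem_filter.mpr ⟨hzV, hzS', x, hS₀sub hx0, hadj⟩)
  refine ⟨hball, ?_⟩
  rw [hball]
  -- Part 2
  have hsplit : (ball (p + 1) m S₀).card =
      ((ball (p + 1) m S₀).filter fun z => p ∉ z).card +
      ((ball (p + 1) m S₀).filter fun z => p ∈ z).card := by
    rw [← Finset.card_filter_add_card_filter_not (p := fun z => p ∉ z)]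
    simp only [not_not]
  have hA : (ball (p + 1) m S₀).filter (fun z => p ∉ z) = ball p m S₀ := by
    ext z
    rw [Finset.mem_filter, ball, ball, Finset.mem_union, Finset.mem_union]
    constructor
    · rintro ⟨h | h, hpz⟩
      · exact Or.inl h
      · right
        rw [boundary, Finset.mem_filter] at h ⊢
        obtain ⟨hzV, h2, h3⟩ := h
        refine ⟨?_, h2, h3⟩
        rw [johnsonVerts, Finset.mem_powersetCard] at hzV ⊢
        refine ⟨?_, hzV.2⟩
        intro c hc
        have := Finset.mem_range.mp (hzV.1 hc)
        have : c ≠ p := fun h => hpz (h ▸ hc)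
        exact Finset.mem_range.mpr (by omega)
    · rintro (h | h)
      · exact ⟨Or.inl h, (Finset.mem_filter.mp h).2⟩
      · rw [boundary, Finset.mem_filter] at h
        obtain ⟨hzV, h2, h3⟩ := h
        rw [johnsonVerts, Finset.mem_powersetCard] at hzV
        have hpz : p ∉ z := fun hc => by
          have := Finset.mem_range.mp (hzV.1 hc); omega
        refine ⟨Or.inr ?_, hpz⟩
        rw [boundary, Finset.mem_filter]
        refine ⟨?_, h2, h3⟩
        rw [johnsonVerts, Finset.mem_powersetCard]
        exact ⟨hzV.1.trans (Finset.range_subset_range.mpr (by omega)), hzV.2⟩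
  have hB : (ball (p + 1) m S₀).filter (fun z => p ∈ z) =
      (lowShadow p m S₀).image (insert p) := by
    ext z
    constructor
    · intro hz
      obtain ⟨hzball, hpz⟩ := Finset.mem_filter.mp hz
      have hz0 : z ∉ S₀ := fun h => (Finset.mem_filter.mp h).2 hpz
      rcases Finset.mem_union.mp hzball with h | h
      · exact absurd h hz0
      · rw [boundary, Finset.mem_filter] at h
        obtain ⟨hzV, _, x, hx0, hadj⟩ := h
        have hxc := (hS₀range x hx0).2
        have hzc := (Finset.mem_powersetCard.mp hzV).2
        obtain ⟨a, b, hax, haz, hbz, hbx, hzeq⟩ :=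
          symmDiff_card_two_s8 (hxc.trans hzc.symm) hadj
        have hpxr : p ∉ x := fun h => by
          have := Finset.mem_range.mp ((hS₀range x hx0).1 h); omega
        have hb : b = p := by
          rw [hzeq] at hpz
          rcases Finset.mem_insert.mp hpz with h | h
          · exact h.symm
          · exact absurd (Finset.mem_of_mem_erase h) hpxr
        rw [Finset.mem_image]
        refine ⟨x.erase a, ?_, by rw [hzeq, hb]⟩
        rw [lowShadow, Finset.mem_filter, Finset.mem_powersetCard]
        exact ⟨⟨(Finset.erase_subset a x).trans (hS₀range x hx0).1,
          by rw [Finset.card_erase_of_mem hax, hxc]⟩, x, hx0, Finset.erase_subset a x⟩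
    · intro hz
      obtain ⟨t, ht, rfl⟩ := Finset.mem_image.mp hz
      rw [lowShadow, Finset.mem_filter, Finset.mem_powersetCard] at ht
      obtain ⟨⟨htr, htc⟩, s, hs0, hts⟩ := ht
      have hpt : p ∉ t := fun h => by
        have := Finset.mem_range.mp (htr h); omega
      have hsr := hS₀range s hs0
      have hps : p ∉ s := fun h => by
        have := Finset.mem_range.mp (hsr.1 h); omega
      have hcd : (s \ t).card = 1 := by
        rw [Finset.card_sdiff_of_subset hts, hsr.2, htc]; omega
      obtain ⟨c, hc⟩ := Finset.card_eq_one.mp hcd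
      have hcs : c ∈ s ∧ c ∉ t := by
        have : c ∈ s \ t := hc ▸ Finset.mem_singleton_self c
        exact Finset.mem_sdiff.mp this
      have hcp : c ≠ p := fun h => hps (h ▸ hcs.1)
      have hterase : t = s.erase c := by
        apply Finset.eq_of_subset_of_card_le
        · intro d hd
          exact Finset.mem_erase.mpr ⟨fun h => hcs.2 (h ▸ hd), hts hd⟩
        · rw [Finset.card_erase_of_mem hcs.1, hsr.2, htc]
      rw [Finset.mem_filter]
      refine ⟨?_, Finset.mem_insert_self p t⟩
      rw [ball, Finset.mem_union]
      right
      rw [boundary, Finset.mem_filter]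
      refine ⟨?_, fun h => (Finset.mem_filter.mp h).2 (Finset.mem_insert_self p t),
        s, hs0, ?_⟩
      · rw [johnsonVerts, Finset.mem_powersetCard]
        constructor
        · intro d hd
          rcases Finset.mem_insert.mp hd with rfl | hdt
          · exact Finset.mem_range.mpr (by omega)
          · exact (htr.trans (Finset.range_subset_range.mpr (by omega))) hdt
        · rw [Finset.card_insert_of_notMem hpt, htc]; omega
      · rw [hterase]
        exact card_symmDiff_insert_erase hcs.1 hps hcp
  have hinj : Set.InjOn (insert p) ((lowShadow p m S₀ : Finset (Finset ℕ)) : Set (Finset ℕ)) := by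
    intro t1 ht1 t2 ht2 heq
    have hp1 : p ∉ t1 := fun h => by
      have := Finset.mem_range.mp
        ((Finset.mem_powersetCard.mp (Finset.mem_filter.mp ht1).1).1 h)
      omega
    have hp2 : p ∉ t2 := fun h => by
      have := Finset.mem_range.mp
        ((Finset.mem_powersetCard.mp (Finset.mem_filter.mp ht2).1).1 h)
      omega
    rw [← Finset.erase_insert hp1, ← Finset.erase_insert hp2, heq]
  rw [hsplit, hA, hB, Finset.card_image_of_injOn hinj]
end

section
/- Let 1 ≤ m ≤ n₀ ≤ n and let S be a family of m-element subsets of [n₀], viewed also as a set of vertices of the Johnson graph J(n,m). Then |B(S)| = |B₀(S)| + (n − n₀)·|Δ(S)|, where B denotes the ball in J(n,m), B₀ denotes the ball in J(n₀,m), and Δ(S) is the lower shadow of S. -/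
open Finset

lemma sdiff_cards {x y : Finset ℕ} (hc : x.card = y.card) (h : (symmDiff x y).card = 2) :
    (x \ y).card = 1 ∧ (y \ x).card = 1 := by
  have hd : Disjoint (x \ y) (y \ x) := disjoint_sdiff_sdiff
  have hsymm : symmDiff x y = (x \ y) ∪ (y \ x) := by
    rw [symmDiff_def, Finset.sup_eq_union]
  rw [hsymm, Finset.card_union_of_disjoint hd] at h
  have h1 := Finset.card_sdiff_add_card_inter x y
  have h2 := Finset.card_sdiff_add_card_inter y x
  rw [Finset.inter_comm] at h2
  omega

/-- For `1 ≤ m ≤ n₀ ≤ n` and a family `S` of `m`-subsets of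
`[n₀]`, the ball of `S` in `J(n,m)` satisfies
`|B(S)| = |B₀(S)| + (n - n₀)·|Δ(S)|`, where `B₀` is the ball in `J(n₀,m)`. -/
theorem card_ball_eq_card_ball_add_shadow
    (n₀ n m : ℕ) (hm : 1 ≤ m) (hmn₀ : m ≤ n₀) (hn₀n : n₀ ≤ n)
    (S : Finset (Finset ℕ)) (hS : S ⊆ johnsonVerts n₀ m) :
    (ball n m S).card = (ball n₀ m S).card + (n - n₀) * (lowShadow n₀ m S).card := by
  classical
  have hsub : ∀ x ∈ S, x ⊆ Finset.range n₀ ∧ x.card = m := by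
    intro x hx
    have := hS hx
    simpa [johnsonVerts, Finset.mem_powersetCard] using this
  set T := lowShadow n₀ m S with hT
  have hTmem : ∀ t ∈ T, t ⊆ Finset.range n₀ ∧ t.card = m - 1 ∧ ∃ s ∈ S, t ⊆ s := by
    intro t ht
    simp only [hT, lowShadow, Finset.mem_filter, Finset.mem_powersetCard] at ht
    tauto
  set D := ((Finset.Ico n₀ n) ×ˢ T).image (fun p => insert p.1 p.2) with hDdef
  have hball₀ : ∀ y ∈ ball n₀ m S, y ⊆ Finset.range n₀ := by
    intro y hy
    rcases Finset.mem_union.1 hy with hy | hy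
    · exact (hsub y hy).1
    · simp only [boundary, johnsonVerts, Finset.mem_filter, Finset.mem_powersetCard] at hy
      exact hy.1.1
  have hDmem : ∀ y ∈ D, ∃ j ∈ y, n₀ ≤ j := by
    intro y hy
    simp only [hDdef, Finset.mem_image, Finset.mem_product, Finset.mem_Ico] at hy
    obtain ⟨⟨j, t⟩, ⟨⟨hj1, hj2⟩, ht⟩, rfl⟩ := hy
    exact ⟨j, Finset.mem_insert_self _ _, hj1⟩
  have hdisj : Disjoint (ball n₀ m S) D := by
    rw [Finset.disjoint_left]
    intro y hy hyD
    obtain ⟨j, hjy, hj⟩ := hDmem y hyD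
    have := hball₀ y hy hjy
    simp only [Finset.mem_range] at this
    omega
  have hmain : ball n m S = ball n₀ m S ∪ D := by
    apply Finset.Subset.antisymm
    · intro y hy
      rcases Finset.mem_union.1 hy with hy | hy
      · exact Finset.mem_union_left _ (Finset.mem_union_left _ hy)
      · simp only [boundary, johnsonVerts, Finset.mem_filter, Finset.mem_powersetCard] at hy
        obtain ⟨⟨hyn, hycard⟩, hyS, x, hxS, hxy⟩ := hy
        obtain ⟨hxsub, hxcard⟩ := hsub x hxS
        have hcards := sdiff_cards (by rw [hxcard, hycard]) hxy
        by_cases hy₀ : y ⊆ Finset.range n₀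
        · refine Finset.mem_union_left _ (Finset.mem_union_right _ ?_)
          simp only [boundary, johnsonVerts, Finset.mem_filter, Finset.mem_powersetCard]
          exact ⟨⟨hy₀, hycard⟩, hyS, x, hxS, hxy⟩
        · obtain ⟨j, hjy, hjn₀⟩ : ∃ j ∈ y, ¬ j < n₀ := by
            by_contra h
            push_neg at h
            exact hy₀ fun a ha => Finset.mem_range.2 (h a ha)
          push_neg at hjn₀
          refine Finset.mem_union_right _ ?_
          have hjx : j ∉ x := fun h => by
            have := hxsub h; simp only [Finset.mem_range] at this; omega
          obtain ⟨b, hb⟩ := Finset.card_eq_one.1 hcards.2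
          have hjb : j = b := by
            have : j ∈ y \ x := Finset.mem_sdiff.2 ⟨hjy, hjx⟩
            rw [hb] at this; simpa using this
          have htx : y.erase j ⊆ x := by
            intro a ha
            have hay : a ∈ y := Finset.mem_of_mem_erase ha
            have haj : a ≠ j := Finset.ne_of_mem_erase ha
            by_contra hax
            have : a ∈ y \ x := Finset.mem_sdiff.2 ⟨hay, hax⟩
            rw [hb] at this
            exact haj (by simpa [← hjb] using this)
          refine Finset.mem_image.2 ⟨(j, y.erase j), ?_, ?_⟩
          · refine Finset.mem_product.2 ⟨Finset.mem_Ico.2 ⟨hjn₀, ?_⟩, ?_⟩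
            · exact Finset.mem_range.1 (hyn hjy)
            · simp only [hT, lowShadow, Finset.mem_filter, Finset.mem_powersetCard]
              exact ⟨⟨htx.trans hxsub,
                by rw [Finset.card_erase_of_mem hjy, hycard]⟩, x, hxS, htx⟩
          · exact Finset.insert_erase hjy
    · intro y hy
      rcases Finset.mem_union.1 hy with hy | hy
      · rcases Finset.mem_union.1 hy with hy | hy
        · exact Finset.mem_union_left _ hy
        · refine Finset.mem_union_right _ ?_
          simp only [boundary, johnsonVerts, Finset.mem_filter, Finset.mem_powersetCard] at hy ⊢
          exact ⟨⟨hy.1.1.trans (Finset.range_subset_range.2 hn₀n), hy.1.2⟩, hy.2⟩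
      · simp only [hDdef, Finset.mem_image, Finset.mem_product, Finset.mem_Ico] at hy
        obtain ⟨⟨j, t⟩, ⟨⟨hj1, hj2⟩, ht⟩, rfl⟩ := hy
        obtain ⟨htsub, htcard, s, hsS, hts⟩ := hTmem t ht
        obtain ⟨hssub, hscard⟩ := hsub s hsS
        have hjt : j ∉ t := fun h => by
          have := htsub h; simp only [Finset.mem_range] at this; omega
        have hjs : j ∉ s := fun h => by
          have := hssub h; simp only [Finset.mem_range] at this; omega
        have hst : (s \ t).card = 1 := by
          rw [Finset.card_sdiff_of_subset hts, hscard, htcard]; omega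
        obtain ⟨a, ha⟩ := Finset.card_eq_one.1 hst
        have hasdiff : a ∈ s \ t := by rw [ha]; simp
        have has : a ∈ s := (Finset.mem_sdiff.1 hasdiff).1
        have hat : a ∉ t := (Finset.mem_sdiff.1 hasdiff).2
        have haj : a ≠ j := fun h => hjs (h ▸ has)
        have hseq : s = insert a t := by
          have := Finset.sdiff_union_of_subset hts
          rw [ha] at this
          rw [← this]
          rw [Finset.insert_eq]
        refine Finset.mem_union_right _ ?_
        simp only [boundary, johnsonVerts, Finset.mem_filter, Finset.mem_powersetCard]
        refine ⟨⟨?_, ?_⟩, ?_, s, hsS, ?_⟩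
        · intro u hu
          rcases Finset.mem_insert.1 hu with rfl | hu
          · exact Finset.mem_range.2 hj2
          · exact Finset.range_subset_range.2 hn₀n (htsub hu)
        · rw [Finset.card_insert_of_notMem hjt, htcard]; omega
        · intro hIn
          have := (hsub _ hIn).1 (Finset.mem_insert_self j t)
          simp only [Finset.mem_range] at this; omega
        · have hsymm : symmDiff s (insert j t) = {a, j} := by
            rw [hseq]
            ext u
            simp only [Finset.mem_symmDiff, Finset.mem_insert, Finset.mem_singleton]
            constructor
            · rintro (⟨h1, h2⟩ | ⟨h1, h2⟩) <;> push_neg at h2 <;> tauto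
            · rintro (rfl | rfl)
              · exact Or.inl ⟨Or.inl rfl, by push_neg; exact ⟨haj, hat⟩⟩
              · exact Or.inr ⟨Or.inl rfl, by push_neg; exact ⟨Ne.symm haj, hjt⟩⟩
          rw [hsymm, Finset.card_insert_of_notMem (by simp [haj]), Finset.card_singleton]
  have hcardD : D.card = (n - n₀) * T.card := by
    have hinj : Set.InjOn (fun p : ℕ × Finset ℕ => insert p.1 p.2)
        (↑((Finset.Ico n₀ n) ×ˢ T)) := by
      intro p hp q hq hpq
      simp only [Finset.coe_product, Set.mem_prod, Finset.mem_coe, Finset.mem_Ico] at hp hq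
      obtain ⟨⟨hp1, hp2⟩, hpT⟩ := hp
      obtain ⟨⟨hq1, hq2⟩, hqT⟩ := hq
      have hpt : p.1 ∉ p.2 := fun h => by
        have := (hTmem _ hpT).1 h; simp only [Finset.mem_range] at this; omega
      have hqt : q.1 ∉ q.2 := fun h => by
        have := (hTmem _ hqT).1 h; simp only [Finset.mem_range] at this; omega
      simp only at hpq
      have h1 : q.1 = p.1 := by
        have : q.1 ∈ insert p.1 p.2 := hpq ▸ Finset.mem_insert_self q.1 q.2
        rcases Finset.mem_insert.1 this with h | h
        · exact h
        · exfalso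
          have := (hTmem _ hpT).1 h
          simp only [Finset.mem_range] at this; omega
      have h2 : p.2 = q.2 := by
        have := congrArg (fun s => Finset.erase s p.1) hpq
        rw [Finset.erase_insert hpt, h1] at this
        rwa [Finset.erase_insert (by rwa [h1] at hqt)] at this
      exact Prod.ext h1.symm h2
    rw [hDdef, Finset.card_image_of_injOn hinj, Finset.card_product, Nat.card_Ico]
  rw [hmain, Finset.card_union_of_disjoint hdisj, hcardD]
end
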